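/- arXiv:2310.04851 — 6 statements merged into one kernel-verified Lean document; each statement's English description precedes it below -/
import Mathlib

section
/- For every pair of integers m, n ≥ 3, the star chromatic number of the tensor product of cycles satisfies χ_s(C_m × C_n) ≥ 5. -/
/-- The tensor (categorical) product of two simple graphs: `(u,v)` and `(u',v')` are
adjacent iff `u` is adjacent to `u'` in `G` and `v` is adjacent to `v'` in `H`. -/
def SimpleGraph.tensorProd {α β : Type*} (G : SimpleGraph α) (H : SimpleGraph β) :
    SimpleGraph (α × β) where
  Adj x y := G.Adj x.1 y.1 ∧ H.Adj x.2 y.2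
  symm := ⟨fun _ _ h => ⟨h.1.symm, h.2.symm⟩⟩
  loopless := ⟨fun x h => G.loopless.irrefl x.1 h.1⟩

/-- A star coloring of `G` with colors in `Fin n`: a proper coloring such that every
path on four vertices (i.e. of length three) uses at least three distinct colors. -/
def SimpleGraph.IsStarColoring {α : Type*} (G : SimpleGraph α) {n : ℕ} (f : α → Fin n) : Prop :=
  (∀ ⦃u v : α⦄, G.Adj u v → f u ≠ f v) ∧
  ∀ (u v : α) (p : G.Walk u v), p.IsPath → p.length = 3 →
    3 ≤ (p.support.map f).toFinset.card

/-- The star chromatic number of `G`: the least number of colors in a star coloring. -/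
noncomputable def SimpleGraph.starChromaticNumber {α : Type*} (G : SimpleGraph α) : ℕ :=
  sInf {n : ℕ | ∃ f : α → Fin n, G.IsStarColoring f}

open SimpleGraph

namespace StarAux

lemma five_absurd {k : ℕ} (hk : k ≤ 4) {a b c d e : Fin k}
    (h1 : a ≠ b) (h2 : a ≠ c) (h3 : a ≠ d) (h4 : a ≠ e) (h5 : b ≠ c) (h6 : b ≠ d)
    (h7 : b ≠ e) (h8 : c ≠ d) (h9 : c ≠ e) (h10 : d ≠ e) : False := by
  have hcard : ({a, b, c, d, e} : Finset (Fin k)).card = 5 := by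
    rw [Finset.card_insert_of_notMem (by simp [h1, h2, h3, h4]),
        Finset.card_insert_of_notMem (by simp [h5, h6, h7]),
        Finset.card_insert_of_notMem (by simp [h8, h9]),
        Finset.card_insert_of_notMem (by simp [h10]),
        Finset.card_singleton]
  have hle := Finset.card_le_univ ({a, b, c, d, e} : Finset (Fin k))
  rw [hcard] at hle
  simp [Finset.card_univ] at hle
  omega

lemma four {k : ℕ} (hk : k ≤ 4) {A B C x y : Fin k} (hAB : A ≠ B) (hAC : A ≠ C) (hBC : B ≠ C)
    (hxA : x ≠ A) (hxB : x ≠ B) (hxC : x ≠ C) (hyA : y ≠ A) (hyB : y ≠ B) (hyC : y ≠ C) :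
    x = y := by
  by_contra hxy
  exact five_absurd hk hAB hAC hxA.symm hyA.symm hBC hxB.symm hyB.symm hxC.symm hyC.symm hxy

lemma pigeon {k : ℕ} (hk : k ≤ 4) {A x1 x2 x3 x4 : Fin k}
    (h1 : x1 ≠ A) (h2 : x2 ≠ A) (h3 : x3 ≠ A) (h4 : x4 ≠ A) :
    x1 = x2 ∨ x1 = x3 ∨ x1 = x4 ∨ x2 = x3 ∨ x2 = x4 ∨ x3 = x4 := by
  by_contra hc
  push_neg at hc
  obtain ⟨a1, a2, a3, a4, a5, a6⟩ := hc
  exact five_absurd hk h1.symm h2.symm h3.symm h4.symm a1 a2 a3 a4 a5 a6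

lemma key_of_star {α : Type*} {G : SimpleGraph α} {k : ℕ} {f : α → Fin k}
    (hprop : ∀ ⦃u v : α⦄, G.Adj u v → f u ≠ f v)
    (hstar : ∀ (u v : α) (p : G.Walk u v), p.IsPath → p.length = 3 →
      3 ≤ (p.support.map f).toFinset.card) :
    ∀ ⦃p q r s : α⦄, G.Adj p q → G.Adj q r → G.Adj r s → p ≠ r → p ≠ s → q ≠ s →
      f q = f s → f p ≠ f q ∧ f p ≠ f r := by
  intro p q r s h1 h2 h3 hpr hps hqs hfqs
  set W : G.Walk p s := Walk.cons h1 (Walk.cons h2 (Walk.cons h3 Walk.nil)) with hW_def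
  have hW : W.IsPath := by
    rw [SimpleGraph.Walk.isPath_def]
    show List.Nodup [p, q, r, s]
    simp only [List.nodup_cons, List.mem_cons, List.not_mem_nil, or_false,
      List.mem_singleton, List.nodup_nil, and_true, not_or]
    exact ⟨⟨G.ne_of_adj h1, hpr, hps⟩, ⟨G.ne_of_adj h2, hqs⟩, ⟨G.ne_of_adj h3, not_false⟩⟩
  have hlen : W.length = 3 := rfl
  have main : f p ∉ ({f q, f r} : Finset (Fin k)) := by
    intro hmem
    have hsub : (W.support.map f).toFinset ⊆ {f q, f r} := by
      intro x hx
      rw [List.mem_toFinset] at hx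
      have hx' : x ∈ [f p, f q, f r, f s] := hx
      simp only [List.mem_cons, List.not_mem_nil, or_false] at hx'
      rcases hx' with rfl | rfl | rfl | rfl
      · exact hmem
      · simp
      · simp
      · simp [← hfqs]
    have hcard := hstar p s W hW hlen
    have h2' := Finset.card_le_card hsub
    have hb : ({f q, f r} : Finset (Fin k)).card ≤ 2 :=
      le_trans (Finset.card_insert_le _ _) (by simp)
    omega
  exact ⟨fun h => main (by simp [h]), fun h => main (by simp [h])⟩

structure Grid {α : Type*} (G : SimpleGraph α) where
  ι : ℤ → ℤ → α
  adj : ∀ x y : ℤ, G.Adj (ι x y) (ι (x + 1) (y + 1))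
  adj' : ∀ x y : ℤ, G.Adj (ι x y) (ι (x + 1) (y - 1))
  ne12 : ∀ x y x' y' : ℤ,
    ((x - x').natAbs = 1 ∨ (x - x').natAbs = 2 ∨ (y - y').natAbs = 1 ∨ (y - y').natAbs = 2) →
    ι x y ≠ ι x' y'

namespace Grid

variable {α : Type*} {G : SimpleGraph α}

lemma adjH (g : Grid G) {X Y X' Y' : ℤ} (h1 : X' - X = 1 ∨ X' - X = -1)
    (h2 : Y' - Y = 1 ∨ Y' - Y = -1) : G.Adj (g.ι X Y) (g.ι X' Y') := by
  rcases h1 with h1 | h1 <;> rcases h2 with h2 | h2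
  · obtain rfl : X' = X + 1 := by omega
    obtain rfl : Y' = Y + 1 := by omega
    exact g.adj X Y
  · obtain rfl : X' = X + 1 := by omega
    obtain rfl : Y' = Y - 1 := by omega
    exact g.adj' X Y
  · obtain rfl : X = X' + 1 := by omega
    obtain rfl : Y = Y' - 1 := by omega
    exact (g.adj' X' Y').symm
  · obtain rfl : X = X' + 1 := by omega
    obtain rfl : Y = Y' + 1 := by omega
    exact (g.adj X' Y').symm

lemma natAbs_unit_mul {ε a : ℤ} (hε : ε = 1 ∨ ε = -1) : (ε * a).natAbs = a.natAbs := by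
  rcases hε with rfl | rfl <;> simp

def transA (g : Grid G) (ε δ s t : ℤ) (hε : ε = 1 ∨ ε = -1) (hδ : δ = 1 ∨ δ = -1) :
    Grid G where
  ι x y := g.ι (ε * x + s) (δ * y + t)
  adj x y := g.adjH
    (by rcases hε with rfl | rfl
        · left; ring
        · right; ring)
    (by rcases hδ with rfl | rfl
        · left; ring
        · right; ring)
  adj' x y := g.adjH
    (by rcases hε with rfl | rfl
        · left; ring
        · right; ring)
    (by rcases hδ with rfl | rfl
        · right; ring
        · left; ring)
  ne12 x y x' y' h := g.ne12 _ _ _ _ (by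
    have e1 : (ε * x + s) - (ε * x' + s) = ε * (x - x') := by ring
    have e2 : (δ * y + t) - (δ * y' + t) = δ * (y - y') := by ring
    rw [e1, e2, natAbs_unit_mul hε, natAbs_unit_mul hδ]
    exact h)

def transB (g : Grid G) (ε δ s t : ℤ) (hε : ε = 1 ∨ ε = -1) (hδ : δ = 1 ∨ δ = -1) :
    Grid G where
  ι x y := g.ι (ε * y + s) (δ * x + t)
  adj x y := g.adjH
    (by rcases hε with rfl | rfl
        · left; ring
        · right; ring)
    (by rcases hδ with rfl | rfl
        · left; ring
        · right; ring)
  adj' x y := g.adjH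
    (by rcases hε with rfl | rfl
        · right; ring
        · left; ring)
    (by rcases hδ with rfl | rfl
        · left; ring
        · right; ring)
  ne12 x y x' y' h := g.ne12 _ _ _ _ (by
    have e1 : (ε * y + s) - (ε * y' + s) = ε * (y - y') := by ring
    have e2 : (δ * x + t) - (δ * x' + t) = δ * (x - x') := by ring
    rw [e1, e2, natAbs_unit_mul hε, natAbs_unit_mul hδ]
    tauto)

end Grid

section
variable {α : Type*} {G : SimpleGraph α} {k : ℕ} {f : α → Fin k}

theorem rowLemma (hk : k ≤ 4)
    (hprop : ∀ ⦃u v : α⦄, G.Adj u v → f u ≠ f v)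
    (hkey : ∀ ⦃p q r s : α⦄, G.Adj p q → G.Adj q r → G.Adj r s → p ≠ r → p ≠ s → q ≠ s →
      f q = f s → f p ≠ f q ∧ f p ≠ f r)
    (g : Grid G) (hpair : f (g.ι 1 1) = f (g.ι 1 (-1))) : False := by
  have adj : ∀ X Y X' Y' : ℤ, (X' - X = 1 ∨ X' - X = -1) → (Y' - Y = 1 ∨ Y' - Y = -1) →
      G.Adj (g.ι X Y) (g.ι X' Y') := fun _ _ _ _ h1 h2 => g.adjH h1 h2
  have hBA : f (g.ι 1 1) ≠ f (g.ι 0 0) := hprop (adj 1 1 0 0 (by decide) (by decide))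
  have k1 := hkey (adj 2 0 1 1 (by decide) (by decide)) (adj 1 1 0 0 (by decide) (by decide))
    (adj 0 0 1 (-1) (by decide) (by decide)) (g.ne12 2 0 0 0 (by decide))
    (g.ne12 2 0 1 (-1) (by decide)) (g.ne12 1 1 1 (-1) (by decide)) hpair
  have k2 := hkey (adj 0 2 1 1 (by decide) (by decide)) (adj 1 1 0 0 (by decide) (by decide))
    (adj 0 0 1 (-1) (by decide) (by decide)) (g.ne12 0 2 0 0 (by decide))
    (g.ne12 0 2 1 (-1) (by decide)) (g.ne12 1 1 1 (-1) (by decide)) hpair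
  have k3 := hkey (adj 0 2 1 1 (by decide) (by decide)) (adj 1 1 2 0 (by decide) (by decide))
    (adj 2 0 1 (-1) (by decide) (by decide)) (g.ne12 0 2 2 0 (by decide))
    (g.ne12 0 2 1 (-1) (by decide)) (g.ne12 1 1 1 (-1) (by decide)) hpair
  have k4 := hkey (adj 2 2 1 1 (by decide) (by decide)) (adj 1 1 0 0 (by decide) (by decide))
    (adj 0 0 1 (-1) (by decide) (by decide)) (g.ne12 2 2 0 0 (by decide))
    (g.ne12 2 2 1 (-1) (by decide)) (g.ne12 1 1 1 (-1) (by decide)) hpair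
  have k5 := hkey (adj 2 2 1 1 (by decide) (by decide)) (adj 1 1 2 0 (by decide) (by decide))
    (adj 2 0 1 (-1) (by decide) (by decide)) (g.ne12 2 2 2 0 (by decide))
    (g.ne12 2 2 1 (-1) (by decide)) (g.ne12 1 1 1 (-1) (by decide)) hpair
  have hpq : f (g.ι 0 2) = f (g.ι 2 2) :=
    four hk hBA.symm k1.2.symm k1.1.symm k2.2 k2.1 k3.2 k4.2 k4.1 k5.2
  have k6 := hkey (adj (-1) 1 0 2 (by decide) (by decide)) (adj 0 2 1 1 (by decide) (by decide))
    (adj 1 1 2 2 (by decide) (by decide)) (g.ne12 (-1) 1 1 1 (by decide))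
    (g.ne12 (-1) 1 2 2 (by decide)) (g.ne12 0 2 2 2 (by decide)) hpq
  have hcv : f (g.ι (-1) 1) ≠ f (g.ι 0 0) := hprop (adj (-1) 1 0 0 (by decide) (by decide))
  have hcC : f (g.ι (-1) 1) = f (g.ι 2 0) :=
    four hk hBA.symm k2.2.symm k2.1.symm hcv k6.2 k6.1 k1.2 k1.1 k3.2.symm
  have k7 := hkey (adj 1 3 0 2 (by decide) (by decide)) (adj 0 2 1 1 (by decide) (by decide))
    (adj 1 1 2 2 (by decide) (by decide)) (g.ne12 1 3 1 1 (by decide))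
    (g.ne12 1 3 2 2 (by decide)) (g.ne12 0 2 2 2 (by decide)) hpq
  have k8 := hkey (adj (-1) 1 0 2 (by decide) (by decide)) (adj 0 2 1 3 (by decide) (by decide))
    (adj 1 3 2 2 (by decide) (by decide)) (g.ne12 (-1) 1 1 3 (by decide))
    (g.ne12 (-1) 1 2 2 (by decide)) (g.ne12 0 2 2 2 (by decide)) hpq
  have hwr : f (g.ι 2 0) ≠ f (g.ι 1 3) := fun h => k8.2 (hcC.trans h)
  have hrA : f (g.ι 1 3) = f (g.ι 0 0) :=
    four hk k1.1.symm k2.1.symm k3.2.symm k7.2 (fun h => hwr h.symm) k7.1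
      hBA.symm k1.2.symm k2.2.symm
  have k9 := hkey (adj 3 1 2 2 (by decide) (by decide)) (adj 2 2 1 3 (by decide) (by decide))
    (adj 1 3 0 2 (by decide) (by decide)) (g.ne12 3 1 1 3 (by decide))
    (g.ne12 3 1 0 2 (by decide)) (g.ne12 2 2 0 2 (by decide)) hpq.symm
  have k10 := hkey (adj 3 1 2 2 (by decide) (by decide)) (adj 2 2 1 1 (by decide) (by decide))
    (adj 1 1 0 2 (by decide) (by decide)) (g.ne12 3 1 1 1 (by decide))
    (g.ne12 3 1 0 2 (by decide)) (g.ne12 2 2 0 2 (by decide)) hpq.symm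
  have htC : f (g.ι 3 1) = f (g.ι 2 0) :=
    four hk hBA.symm k2.2.symm k2.1.symm (fun h => k9.2 (h.trans hrA.symm)) k10.2
      (fun h => k10.1 (h.trans hpq)) k1.2 k1.1 k3.2.symm
  exact hprop (adj 3 1 2 0 (by decide) (by decide)) htC

theorem rowPair (hk : k ≤ 4)
    (hprop : ∀ ⦃u v : α⦄, G.Adj u v → f u ≠ f v)
    (hkey : ∀ ⦃p q r s : α⦄, G.Adj p q → G.Adj q r → G.Adj r s → p ≠ r → p ≠ s → q ≠ s →
      f q = f s → f p ≠ f q ∧ f p ≠ f r)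
    (g : Grid G) {X Y X' Y' : ℤ}
    (hcond : (X = X' ∧ (Y - Y' = 2 ∨ Y - Y' = -2)) ∨ (Y = Y' ∧ (X - X' = 2 ∨ X - X' = -2)))
    (hpair : f (g.ι X Y) = f (g.ι X' Y')) : False := by
  rcases hcond with ⟨rfl, h | h⟩ | ⟨rfl, h | h⟩
  · obtain rfl : Y' = Y - 2 := by omega
    refine rowLemma hk hprop hkey (g.transA 1 1 (X - 1) (Y - 1) (Or.inl rfl) (Or.inl rfl)) ?_
    show f (g.ι (1 * 1 + (X - 1)) (1 * 1 + (Y - 1))) =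
      f (g.ι (1 * 1 + (X - 1)) (1 * (-1) + (Y - 1)))
    convert hpair using 3 <;> ring
  · obtain rfl : Y' = Y + 2 := by omega
    refine rowLemma hk hprop hkey (g.transA 1 (-1) (X - 1) (Y + 1) (Or.inl rfl) (Or.inr rfl)) ?_
    show f (g.ι (1 * 1 + (X - 1)) ((-1) * 1 + (Y + 1))) =
      f (g.ι (1 * 1 + (X - 1)) ((-1) * (-1) + (Y + 1)))
    convert hpair using 3 <;> ring
  · obtain rfl : X' = X - 2 := by omega
    refine rowLemma hk hprop hkey (g.transB 1 1 (X - 1) (Y - 1) (Or.inl rfl) (Or.inl rfl)) ?_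
    show f (g.ι (1 * 1 + (X - 1)) (1 * 1 + (Y - 1))) =
      f (g.ι (1 * (-1) + (X - 1)) (1 * 1 + (Y - 1)))
    convert hpair using 3 <;> ring
  · obtain rfl : X' = X + 2 := by omega
    refine rowLemma hk hprop hkey (g.transB (-1) 1 (X + 1) (Y - 1) (Or.inr rfl) (Or.inl rfl)) ?_
    show f (g.ι ((-1) * 1 + (X + 1)) (1 * 1 + (Y - 1))) =
      f (g.ι ((-1) * (-1) + (X + 1)) (1 * 1 + (Y - 1)))
    convert hpair using 3 <;> ring

theorem diagLemma (hk : k ≤ 4)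
    (hprop : ∀ ⦃u v : α⦄, G.Adj u v → f u ≠ f v)
    (hkey : ∀ ⦃p q r s : α⦄, G.Adj p q → G.Adj q r → G.Adj r s → p ≠ r → p ≠ s → q ≠ s →
      f q = f s → f p ≠ f q ∧ f p ≠ f r)
    (g : Grid G)
    (g33 : ∀ x y x' y' : ℤ, (x - x').natAbs = 3 → (y - y').natAbs = 3 → g.ι x y ≠ g.ι x' y')
    (hpair : f (g.ι 1 1) = f (g.ι (-1) (-1))) : False := by
  have adj : ∀ X Y X' Y' : ℤ, (X' - X = 1 ∨ X' - X = -1) → (Y' - Y = 1 ∨ Y' - Y = -1) →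
      G.Adj (g.ι X Y) (g.ι X' Y') := fun _ _ _ _ h1 h2 => g.adjH h1 h2
  have hva : f (g.ι 0 0) ≠ f (g.ι 1 1) := hprop (adj 0 0 1 1 (by decide) (by decide))
  have k1 := hkey (adj 0 2 1 1 (by decide) (by decide)) (adj 1 1 0 0 (by decide) (by decide))
    (adj 0 0 (-1) (-1) (by decide) (by decide)) (g.ne12 0 2 0 0 (by decide))
    (g.ne12 0 2 (-1) (-1) (by decide)) (g.ne12 1 1 (-1) (-1) (by decide)) hpair
  have k2 := hkey (adj 2 0 1 1 (by decide) (by decide)) (adj 1 1 0 0 (by decide) (by decide))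
    (adj 0 0 (-1) (-1) (by decide) (by decide)) (g.ne12 2 0 0 0 (by decide))
    (g.ne12 2 0 (-1) (-1) (by decide)) (g.ne12 1 1 (-1) (-1) (by decide)) hpair
  have k3 := hkey (adj 2 2 1 1 (by decide) (by decide)) (adj 1 1 0 0 (by decide) (by decide))
    (adj 0 0 (-1) (-1) (by decide) (by decide)) (g.ne12 2 2 0 0 (by decide))
    (g33 2 2 (-1) (-1) (by decide) (by decide)) (g.ne12 1 1 (-1) (-1) (by decide)) hpair
  rcases pigeon hk hva k1.1 k3.1 k2.1 with h | h | h | h | hC | h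
  · exact rowPair hk hprop hkey g (by decide) h
  · exact k3.2 h.symm
  · exact rowPair hk hprop hkey g (by decide) h
  · exact rowPair hk hprop hkey g (by decide) h
  · -- hC : f (g.ι 0 2) = f (g.ι 2 0)
    have k5 := hkey (adj (-1) 1 0 2 (by decide) (by decide)) (adj 0 2 1 1 (by decide) (by decide))
      (adj 1 1 2 0 (by decide) (by decide)) (g.ne12 (-1) 1 1 1 (by decide))
      (g.ne12 (-1) 1 2 0 (by decide)) (g.ne12 0 2 2 0 (by decide)) hC
    have k6 := hkey (adj 1 3 0 2 (by decide) (by decide)) (adj 0 2 1 1 (by decide) (by decide))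
      (adj 1 1 2 0 (by decide) (by decide)) (g.ne12 1 3 1 1 (by decide))
      (g.ne12 1 3 2 0 (by decide)) (g.ne12 0 2 2 0 (by decide)) hC
    have k7 := hkey (adj (-1) 3 0 2 (by decide) (by decide)) (adj 0 2 1 1 (by decide) (by decide))
      (adj 1 1 2 0 (by decide) (by decide)) (g.ne12 (-1) 3 1 1 (by decide))
      (g33 (-1) 3 2 0 (by decide) (by decide)) (g.ne12 0 2 2 0 (by decide)) hC
    have hap : f (g.ι 1 1) ≠ f (g.ι 0 2) := hprop (adj 1 1 0 2 (by decide) (by decide))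
    rcases pigeon hk hap k5.1 k6.1 k7.1 with h | h | h | hcr | h | h
    · exact rowPair hk hprop hkey g (by decide) h
    · exact rowPair hk hprop hkey g (by decide) h
    · exact k7.2 h.symm
    · -- hcr : f (g.ι (-1) 1) = f (g.ι 1 3)
      have k9 := hkey (adj 1 (-1) 2 0 (by decide) (by decide))
        (adj 2 0 1 1 (by decide) (by decide))
        (adj 1 1 0 2 (by decide) (by decide)) (g.ne12 1 (-1) 1 1 (by decide))
        (g.ne12 1 (-1) 0 2 (by decide)) (g.ne12 2 0 0 2 (by decide)) hC.symm
      have k10 := hkey (adj 3 1 2 0 (by decide) (by decide))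
        (adj 2 0 1 1 (by decide) (by decide))
        (adj 1 1 0 2 (by decide) (by decide)) (g.ne12 3 1 1 1 (by decide))
        (g.ne12 3 1 0 2 (by decide)) (g.ne12 2 0 0 2 (by decide)) hC.symm
      have k11 := hkey (adj 3 (-1) 2 0 (by decide) (by decide))
        (adj 2 0 1 1 (by decide) (by decide))
        (adj 1 1 0 2 (by decide) (by decide)) (g.ne12 3 (-1) 1 1 (by decide))
        (g33 3 (-1) 0 2 (by decide) (by decide)) (g.ne12 2 0 0 2 (by decide)) hC.symm
      have haw : f (g.ι 1 1) ≠ f (g.ι 2 0) := hprop (adj 1 1 2 0 (by decide) (by decide))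
      rcases pigeon hk haw k9.1 k10.1 k11.1 with h | h | h | hbt | h | h
      · exact rowPair hk hprop hkey g (by decide) h
      · exact rowPair hk hprop hkey g (by decide) h
      · exact k11.2 h.symm
      · -- hbt : f (g.ι 1 (-1)) = f (g.ι 3 1)
        have hrv : f (g.ι 1 3) ≠ f (g.ι 0 0) := fun h =>
          hprop (adj (-1) 1 0 0 (by decide) (by decide)) (hcr.trans h)
        have htv : f (g.ι 3 1) ≠ f (g.ι 0 0) := fun h =>
          hprop (adj 1 (-1) 0 0 (by decide) (by decide)) (hbt.trans h)
        have htp : f (g.ι 3 1) ≠ f (g.ι 0 2) := fun h =>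
          k9.1 (hbt.trans (h.trans hC))
        have hrt : f (g.ι 1 3) = f (g.ι 3 1) :=
          four hk hva k1.2.symm k1.1.symm
            hrv k6.2 k6.1
            htv k10.2 htp
        have hrw : f (g.ι 1 3) ≠ f (g.ι 2 0) := fun h => k6.1 (h.trans hC.symm)
        have hq : f (g.ι 2 2) = f (g.ι 2 0) :=
          four hk hva hrv.symm k6.2.symm
            k3.2 k3.1 (hprop (adj 2 2 1 3 (by decide) (by decide)))
            k2.2 k2.1 hrw.symm
        have k14 := hkey (adj 0 2 1 3 (by decide) (by decide))
          (adj 1 3 2 2 (by decide) (by decide)) (adj 2 2 3 1 (by decide) (by decide))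
          (g.ne12 0 2 2 2 (by decide)) (g.ne12 0 2 3 1 (by decide))
          (g.ne12 1 3 3 1 (by decide)) hrt
        exact k14.2 (hC.trans hq.symm)
      · exact rowPair hk hprop hkey g (by decide) h
      · exact rowPair hk hprop hkey g (by decide) h
    · exact rowPair hk hprop hkey g (by decide) h
    · exact rowPair hk hprop hkey g (by decide) h
  · exact rowPair hk hprop hkey g (by decide) h

end

open Fin.CommRing in
theorem noColoring (m' n' : ℕ) {k : ℕ} (hk : k ≤ 4)
    (f : Fin (m' + 3) × Fin (n' + 3) → Fin k)
    (hf : ((cycleGraph (m' + 3)).tensorProd (cycleGraph (n' + 3))).IsStarColoring f) :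
    False := by
  obtain ⟨hprop, hstar⟩ := hf
  have hkey := key_of_star hprop hstar
  have castEq : ∀ (K : ℕ) (x y : ℤ),
      ((x : Fin (K + 3)) = (y : Fin (K + 3))) ↔ ((K + 3 : ℕ) : ℤ) ∣ x - y := by
    intro K x y
    have h : ((x : ZMod (K + 3)) = (y : ZMod (K + 3))) ↔ ((K + 3 : ℕ) : ℤ) ∣ x - y := by
      rw [ZMod.intCast_eq_intCast_iff, Int.modEq_iff_dvd, dvd_sub_comm]
    exact h
  have notDvd : ∀ (K : ℕ) (a : ℤ), (a.natAbs = 1 ∨ a.natAbs = 2) →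
      ¬ ((K + 3 : ℕ) : ℤ) ∣ a := by
    intro K a ha hdvd
    have h2 : (K + 3) ∣ a.natAbs := by
      have h3 := Int.natAbs_dvd_natAbs.mpr hdvd
      rwa [Int.natAbs_natCast] at h3
    have := Nat.le_of_dvd (by omega) h2
    omega
  have cycAdj : ∀ (K : ℕ) (x : ℤ),
      (cycleGraph (K + 3)).Adj ((x : Fin (K + 3))) (((x + 1 : ℤ) : Fin (K + 3))) := by
    intro K x
    rw [cycleGraph_adj]
    right
    push_cast
    ring
  set g0 : Grid ((cycleGraph (m' + 3)).tensorProd (cycleGraph (n' + 3))) :=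
    { ι := fun x y => ((x : Fin (m' + 3)), (y : Fin (n' + 3)))
      adj := fun x y => ⟨cycAdj m' x, cycAdj n' y⟩
      adj' := fun x y => ⟨cycAdj m' x, by
        have h := (cycAdj n' (y - 1)).symm
        rw [show (y - 1) + 1 = y from by ring] at h
        exact h⟩
      ne12 := by
        intro x y x' y' h he
        have h1 : (x : Fin (m' + 3)) = (x' : Fin (m' + 3)) := congrArg Prod.fst he
        have h2 : (y : Fin (n' + 3)) = (y' : Fin (n' + 3)) := congrArg Prod.snd he
        rcases h with h | h | h | h
        · exact notDvd m' _ (Or.inl h) ((castEq m' x x').mp h1)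
        · exact notDvd m' _ (Or.inr h) ((castEq m' x x').mp h1)
        · exact notDvd n' _ (Or.inl h) ((castEq n' y y').mp h2)
        · exact notDvd n' _ (Or.inr h) ((castEq n' y y').mp h2) } with hg0
  have hg33 : ¬(m' = 0 ∧ n' = 0) → ∀ x y x' y' : ℤ,
      (x - x').natAbs = 3 → (y - y').natAbs = 3 → g0.ι x y ≠ g0.ι x' y' := by
    intro hmn x y x' y' h1 h2 he
    have hfst : (x : Fin (m' + 3)) = (x' : Fin (m' + 3)) := congrArg Prod.fst he
    have hsnd : (y : Fin (n' + 3)) = (y' : Fin (n' + 3)) := congrArg Prod.snd he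
    rcases Nat.eq_zero_or_pos m' with hm0 | hmpos
    · rcases Nat.eq_zero_or_pos n' with hn0 | hnpos
      · exact hmn ⟨hm0, hn0⟩
      · have hd := (castEq n' y y').mp hsnd
        have hdd : (n' + 3) ∣ (y - y').natAbs := by
          have h3 := Int.natAbs_dvd_natAbs.mpr hd
          rwa [Int.natAbs_natCast] at h3
        have := Nat.le_of_dvd (by omega) hdd
        omega
    · have hd := (castEq m' x x').mp hfst
      have hdd : (m' + 3) ∣ (x - x').natAbs := by
        have h3 := Int.natAbs_dvd_natAbs.mpr hd
        rwa [Int.natAbs_natCast] at h3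
      have := Nat.le_of_dvd (by omega) hdd
      omega
  have adj : ∀ X Y X' Y' : ℤ, (X' - X = 1 ∨ X' - X = -1) → (Y' - Y = 1 ∨ Y' - Y = -1) →
      ((cycleGraph (m' + 3)).tensorProd (cycleGraph (n' + 3))).Adj (g0.ι X Y) (g0.ι X' Y') :=
    fun _ _ _ _ h1 h2 => g0.adjH h1 h2
  have hA : f (g0.ι 1 1) ≠ f (g0.ι 0 0) := hprop (adj 1 1 0 0 (by decide) (by decide))
  have hB : f (g0.ι 1 (-1)) ≠ f (g0.ι 0 0) := hprop (adj 1 (-1) 0 0 (by decide) (by decide))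
  have hCc : f (g0.ι (-1) 1) ≠ f (g0.ι 0 0) := hprop (adj (-1) 1 0 0 (by decide) (by decide))
  have hD : f (g0.ι (-1) (-1)) ≠ f (g0.ι 0 0) := hprop (adj (-1) (-1) 0 0 (by decide) (by decide))
  rcases pigeon hk hA hB hCc hD with h | h | h | h | h | h
  · -- a b : row pair
    exact rowPair hk hprop hkey g0 (by decide) h
  · -- a c : col pair
    exact rowPair hk hprop hkey g0 (by decide) h
  · -- a d : diagonal
    by_cases h33 : m' = 0 ∧ n' = 0
    · obtain ⟨hm0, hn0⟩ := h33
      subst hm0; subst hn0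
      have e : g0.ι (-1) (-1) = g0.ι 2 2 := by
        show (((-1 : ℤ) : Fin 3), ((-1 : ℤ) : Fin 3)) = (((2 : ℤ) : Fin 3), ((2 : ℤ) : Fin 3))
        have e1 : ((-1 : ℤ) : Fin 3) = ((2 : ℤ) : Fin 3) := (castEq 0 (-1) 2).mpr (by decide)
        rw [e1]
      rw [e] at h
      exact hprop (adj 1 1 2 2 (by decide) (by decide)) h
    · exact diagLemma hk hprop hkey g0 (hg33 h33) h
  · -- b c : anti-diagonal
    by_cases h33 : m' = 0 ∧ n' = 0
    · obtain ⟨hm0, hn0⟩ := h33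
      subst hm0; subst hn0
      have e1 : g0.ι 1 (-1) = g0.ι 1 2 := by
        show (((1 : ℤ) : Fin 3), ((-1 : ℤ) : Fin 3)) = (((1 : ℤ) : Fin 3), ((2 : ℤ) : Fin 3))
        have e : ((-1 : ℤ) : Fin 3) = ((2 : ℤ) : Fin 3) := (castEq 0 (-1) 2).mpr (by decide)
        rw [e]
      have e2 : g0.ι (-1) 1 = g0.ι 2 1 := by
        show (((-1 : ℤ) : Fin 3), ((1 : ℤ) : Fin 3)) = (((2 : ℤ) : Fin 3), ((1 : ℤ) : Fin 3))
        have e : ((-1 : ℤ) : Fin 3) = ((2 : ℤ) : Fin 3) := (castEq 0 (-1) 2).mpr (by decide)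
        rw [e]
      rw [e1, e2] at h
      exact hprop (adj 1 2 2 1 (by decide) (by decide)) h
    · refine diagLemma hk hprop hkey (g0.transA 1 (-1) 0 0 (Or.inl rfl) (Or.inr rfl)) ?_ ?_
      · intro x y x' y' h1 h2
        show g0.ι (1 * x + 0) ((-1) * y + 0) ≠ g0.ι (1 * x' + 0) ((-1) * y' + 0)
        apply hg33 h33
        · rw [show (1 : ℤ) * x + 0 - (1 * x' + 0) = x - x' from by ring]
          exact h1
        · rw [show (-1 : ℤ) * y + 0 - ((-1) * y' + 0) = -(y - y') from by ring, Int.natAbs_neg]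
          exact h2
      · show f (g0.ι (1 * 1 + 0) ((-1) * 1 + 0)) = f (g0.ι (1 * (-1) + 0) ((-1) * (-1) + 0))
        convert h using 3 <;> norm_num
  · -- b d : col pair
    exact rowPair hk hprop hkey g0 (by decide) h
  · -- c d : row pair
    exact rowPair hk hprop hkey g0 (by decide) h

end StarAux


theorem starChromaticNumber_cycleGraph_tensorProd_cycleGraph_ge (m n : ℕ)
    (hm : 3 ≤ m) (hn : 3 ≤ n) :
    5 ≤ ((cycleGraph m).tensorProd (cycleGraph n)).starChromaticNumber := by
  obtain ⟨m', rfl⟩ : ∃ m', m = m' + 3 := ⟨m - 3, by omega⟩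
  obtain ⟨n', rfl⟩ : ∃ n', n = n' + 3 := ⟨n - 3, by omega⟩
  have hne : {N : ℕ | ∃ f : Fin (m' + 3) × Fin (n' + 3) → Fin N,
      ((cycleGraph (m' + 3)).tensorProd (cycleGraph (n' + 3))).IsStarColoring f}.Nonempty := by
    refine ⟨(m' + 3) * (n' + 3), fun v => finProdFinEquiv v, ?_, ?_⟩
    · intro u v huv he
      exact ((cycleGraph (m' + 3)).tensorProd (cycleGraph (n' + 3))).ne_of_adj huv
        (finProdFinEquiv.injective he)
    · intro u v p hp _hlen
      have hnd : (p.support.map (fun v => finProdFinEquiv v)).Nodup :=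
        hp.support_nodup.map finProdFinEquiv.injective
      rw [List.toFinset_card_of_nodup hnd, List.length_map]
      have := SimpleGraph.Walk.length_support p
      omega
  show 5 ≤ sInf _
  have hmem := Nat.sInf_mem hne
  obtain ⟨f, hf⟩ := hmem
  by_contra hcon
  push_neg at hcon
  exact StarAux.noColoring m' n' (by omega) f hf
end

section
/- The star chromatic number of the tensor product of two triangles is 6, i.e. χ_s(C_3 × C_3) = 6. -/
open SimpleGraph

namespace StarAux

abbrev V : Type := Fin 3 × Fin 3
abbrev G : SimpleGraph V := (cycleGraph 3).tensorProd (cycleGraph 3)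

instance : DecidableRel G.Adj := fun _ _ => inferInstanceAs (Decidable (_ ∧ _))

def edgesAt : ℕ → List (Fin 9 × Fin 9)
  | 0 => []
  | 1 => [(0,1)]
  | 2 => [(0,2), (1,2)]
  | 3 => [(1,3)]
  | 4 => [(0,4), (3,4)]
  | 5 => [(4,5), (3,5), (2,5)]
  | 6 => [(1,6), (3,6)]
  | 7 => [(0,7), (6,7), (4,7)]
  | 8 => [(5,8), (6,8), (7,8), (2,8)]
  | _ => []

def quadsAt : ℕ → List (Fin 9 × Fin 9 × Fin 9 × Fin 9)
  | 0 => []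
  | 1 => []
  | 2 => []
  | 3 => [(0,2,1,3), (2,0,1,3)]
  | 4 => [(0,1,3,4), (0,4,3,1), (1,0,4,3), (1,2,0,4), (2,0,4,3), (2,1,0,4), (2,1,3,4), (3,1,0,4)]
  | 5 => [(0,1,2,5), (0,1,3,5), (0,2,5,3), (0,2,5,4), (0,4,3,5), (0,4,5,2), (0,4,5,3), (1,0,2,5), (1,0,4,5), (1,2,5,3), (1,2,5,4), (1,3,4,5), (1,3,5,2), (1,3,5,4), (2,0,4,5), (2,1,3,5), (2,5,3,4), (2,5,4,3), (3,1,2,5), (4,0,2,5)]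
  | 6 => [(0,1,3,6), (0,1,6,3), (0,2,1,6), (0,4,3,6), (1,6,3,4), (1,6,3,5), (2,0,1,6), (2,1,3,6), (2,1,6,3), (2,5,3,6), (4,0,1,6), (4,3,1,6), (4,5,3,6), (5,2,1,6), (5,3,1,6), (5,4,3,6)]
  | 7 => [(0,1,6,7), (0,4,7,6), (0,7,4,3), (0,7,4,5), (0,7,6,1), (0,7,6,3), (1,0,4,7), (1,0,7,4), (1,0,7,6), (1,2,0,7), (1,3,4,7), (1,3,6,7), (1,6,7,4), (2,0,4,7), (2,0,7,4), (2,0,7,6), (2,1,0,7), (2,1,6,7), (2,5,4,7), (3,1,0,7), (3,1,6,7), (3,4,0,7), (3,4,7,6), (3,5,4,7), (3,6,7,4), (4,0,7,6), (4,3,6,7), (5,2,0,7), (5,3,4,7), (5,3,6,7), (5,4,0,7), (5,4,7,6), (6,1,0,7), (6,3,4,7)]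
  | 8 => [(0,1,2,8), (0,1,6,8), (0,2,5,8), (0,2,8,5), (0,2,8,6), (0,2,8,7), (0,4,5,8), (0,4,7,8), (0,7,6,8), (0,7,8,2), (0,7,8,5), (0,7,8,6), (1,0,2,8), (1,0,7,8), (1,2,5,8), (1,2,8,5), (1,2,8,6), (1,2,8,7), (1,3,5,8), (1,3,6,8), (1,6,7,8), (1,6,8,2), (1,6,8,5), (1,6,8,7), (2,0,7,8), (2,1,6,8), (2,5,8,6), (2,5,8,7), (2,8,5,3), (2,8,5,4), (2,8,6,3), (2,8,6,7), (2,8,7,4), (2,8,7,6), (3,1,2,8), (3,1,6,8), (3,4,5,8), (3,4,7,8), (3,5,2,8), (3,5,8,6), (3,5,8,7), (3,6,7,8), (3,6,8,5), (3,6,8,7), (4,0,2,8), (4,0,7,8), (4,3,5,8), (4,3,6,8), (4,5,2,8), (4,5,8,6), (4,5,8,7), (4,7,6,8), (4,7,8,5), (4,7,8,6), (5,2,8,6), (5,2,8,7), (5,3,6,8), (5,4,7,8), (5,8,6,7), (5,8,7,6), (6,1,2,8), (6,3,5,8), (7,0,2,8), (7,4,5,8)]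
  | _ => []

def dec9 : Fin 9 → V
  | 0 => (0, 0)
  | 1 => (1, 1)
  | 2 => (2, 2)
  | 3 => (2, 0)
  | 4 => (1, 2)
  | 5 => (0, 1)
  | 6 => (0, 2)
  | 7 => (2, 1)
  | 8 => (1, 0)


set_option linter.unusedVariables false

def chk2 (l : List ℕ) (p : Fin 9 × Fin 9) : Bool :=
  match l[p.1.val]?, l[p.2.val]? with
  | some x, some y => x != y
  | _, _ => true

def chk4 (l : List ℕ) (q : Fin 9 × Fin 9 × Fin 9 × Fin 9) : Bool :=
  match l[q.1.val]?, l[q.2.1.val]?, l[q.2.2.1.val]?, l[q.2.2.2.val]? with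
  | some a, some b, some c, some d => !(a == c && b == d)
  | _, _, _, _ => true

def validAt (l : List ℕ) : Bool :=
  (edgesAt (l.length - 1)).all (chk2 l) && (quadsAt (l.length - 1)).all (chk4 l)

def ext : ℕ → List ℕ → Bool
  | 0, _ => true
  | n+1, l => (List.range 5).any fun c => validAt (l ++ [c]) && ext n (l ++ [c])

set_option maxRecDepth 400000 in
set_option maxHeartbeats 1000000 in
theorem ext_false : ext 6 [0, 1, 2] = false := by decide

set_option maxRecDepth 100000 in
theorem edgesSpec : ∀ (k : Fin 9), ∀ p ∈ edgesAt k.val, G.Adj (dec9 p.1) (dec9 p.2) := by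
  have h : ∀ (k : Fin 9), (edgesAt k.val).Forall (fun p => G.Adj (dec9 p.1) (dec9 p.2)) := by
    decide
  intro k
  rw [← List.forall_iff_forall_mem]
  exact h k

set_option maxRecDepth 100000 in
theorem quadsSpec : ∀ (k : Fin 9), ∀ q ∈ quadsAt k.val,
    G.Adj (dec9 q.1) (dec9 q.2.1) ∧ G.Adj (dec9 q.2.1) (dec9 q.2.2.1) ∧
    G.Adj (dec9 q.2.2.1) (dec9 q.2.2.2) ∧ dec9 q.1 ≠ dec9 q.2.2.1 ∧
    dec9 q.2.1 ≠ dec9 q.2.2.2 ∧ dec9 q.1 ≠ dec9 q.2.2.2 := by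
  have h : ∀ (k : Fin 9), (quadsAt k.val).Forall (fun q =>
      G.Adj (dec9 q.1) (dec9 q.2.1) ∧ G.Adj (dec9 q.2.1) (dec9 q.2.2.1) ∧
      G.Adj (dec9 q.2.2.1) (dec9 q.2.2.2) ∧ dec9 q.1 ≠ dec9 q.2.2.1 ∧
      dec9 q.2.1 ≠ dec9 q.2.2.2 ∧ dec9 q.1 ≠ dec9 q.2.2.2) := by
    decide
  intro k
  rw [← List.forall_iff_forall_mem]
  exact h k

/-- Any star coloring forbids bicolored paths on four vertices. -/
theorem star_quad {α : Type*} {G : SimpleGraph α} {n : ℕ} {f : α → Fin n}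
    (hf : G.IsStarColoring f) {a b c d : α} (hab : G.Adj a b) (hbc : G.Adj b c)
    (hcd : G.Adj c d) (hac : a ≠ c) (hbd : b ≠ d) (had : a ≠ d) :
    ¬(f a = f c ∧ f b = f d) := by
  rintro ⟨h1, h2⟩
  have hab' := G.ne_of_adj hab
  have hbc' := G.ne_of_adj hbc
  have hcd' := G.ne_of_adj hcd
  have hw : 3 ≤ (((Walk.cons hab (Walk.cons hbc (Walk.cons hcd Walk.nil))).support.map f)).toFinset.card := by
    apply hf.2
    · rw [Walk.isPath_def]
      simp [hab', hbc', hcd', hac, hbd, had]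
    · simp
  have hsupp : ((Walk.cons hab (Walk.cons hbc (Walk.cons hcd Walk.nil))).support.map f)
      = [f a, f b, f c, f d] := by
    simp [Walk.support_cons, Walk.support_nil]
  rw [hsupp, h1, h2, List.toFinset_cons, List.toFinset_cons, List.toFinset_cons,
    List.toFinset_cons, List.toFinset_nil, Finset.insert_comm (f d) (f c),
    Finset.insert_idem, Finset.insert_idem] at hw
  have hle : (insert (f c) (insert (f d) (∅ : Finset (Fin n)))).card ≤ 2 := by
    refine (Finset.card_insert_le _ _).trans ?_
    have := Finset.card_insert_le (f d) (∅ : Finset (Fin n))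
    simp only [Finset.card_empty] at this
    omega
  omega

theorem ext_complete (g : V → ℕ)
    (h2 : ∀ (k : Fin 9), ∀ p ∈ edgesAt k.val, g (dec9 p.1) ≠ g (dec9 p.2))
    (h4 : ∀ (k : Fin 9), ∀ q ∈ quadsAt k.val,
      ¬(g (dec9 q.1) = g (dec9 q.2.2.1) ∧ g (dec9 q.2.1) = g (dec9 q.2.2.2)))
    (hrange : ∀ v, g v < 5) :
    ∀ (n : ℕ) (l : List ℕ), l.length + n = 9 →
      (∀ (i x : ℕ), l[i]? = some x → ∃ h : i < 9, x = g (dec9 ⟨i, h⟩)) →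
      ext n l = true := by
  intro n
  induction n with
  | zero => intro l _ _; rfl
  | succ m ih =>
    intro l hlen hinv
    have h9 : l.length < 9 := by omega
    set c : ℕ := g (dec9 ⟨l.length, h9⟩) with hc
    have hinv' : ∀ (i x : ℕ), (l ++ [c])[i]? = some x → ∃ h : i < 9, x = g (dec9 ⟨i, h⟩) := by
      intro i x hx
      rcases lt_trichotomy i l.length with h | h | h
      · rw [List.getElem?_append_left h] at hx
        exact hinv i x hx
      · subst h
        rw [List.getElem?_concat_length] at hx
        exact ⟨h9, by injection hx with hx; exact hx.symm⟩
      · rw [List.getElem?_eq_none (by simp; omega)] at hx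
        exact absurd hx (by simp)
    have hlen' : (l ++ [c]).length = l.length + 1 := by simp
    have hvalid : validAt (l ++ [c]) = true := by
      rw [validAt, Bool.and_eq_true, List.all_eq_true, List.all_eq_true]
      have hk : (l ++ [c]).length - 1 = l.length := by omega
      rw [hk]
      constructor
      · intro p hp
        have hne := h2 ⟨l.length, h9⟩ p (by simpa using hp)
        rw [chk2]
        cases hx : (l ++ [c])[p.1.val]? with
        | none => rfl
        | some x =>
          cases hy : (l ++ [c])[p.2.val]? with
          | none => rfl
          | some y =>
            obtain ⟨hx9, hxe⟩ := hinv' _ _ hx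
            obtain ⟨hy9, hye⟩ := hinv' _ _ hy
            rw [Fin.eta] at hxe hye
            subst hxe; subst hye
            simpa using hne
      · intro q hq
        have hne := h4 ⟨l.length, h9⟩ q (by simpa using hq)
        rw [chk4]
        cases ha : (l ++ [c])[q.1.val]? with
        | none => rfl
        | some a =>
          cases hb : (l ++ [c])[q.2.1.val]? with
          | none => rfl
          | some b =>
            cases hc' : (l ++ [c])[q.2.2.1.val]? with
            | none => rfl
            | some c' =>
              cases hd : (l ++ [c])[q.2.2.2.val]? with
              | none => rfl
              | some d =>
                obtain ⟨ha9, hae⟩ := hinv' _ _ ha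
                obtain ⟨hb9, hbe⟩ := hinv' _ _ hb
                obtain ⟨hc9, hce⟩ := hinv' _ _ hc'
                obtain ⟨hd9, hde⟩ := hinv' _ _ hd
                rw [Fin.eta] at hae hbe hce hde
                subst hae; subst hbe; subst hce; subst hde
                simp only [Bool.not_eq_true', Bool.and_eq_false_iff, beq_eq_false_iff_ne, ne_eq]
                by_contra hcon
                push_neg at hcon
                exact hne ⟨hcon.1, hcon.2⟩
    have hext : ext m (l ++ [c]) = true := by
      apply ih
      · omega
      · exact hinv'
    rw [ext, List.any_eq_true]
    exact ⟨c, List.mem_range.mpr (hrange _), by rw [hvalid, hext]; rfl⟩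

/-- The explicit 6-star-coloring. -/
def f6 : V → Fin 6 := fun v => ![![0, 0, 1], ![2, 2, 1], ![3, 4, 5]] v.1 v.2

theorem f6_proper : ∀ ⦃a b : V⦄, G.Adj a b → f6 a ≠ f6 b := by decide

theorem f6_quad : ∀ a b c d : V, G.Adj a b → G.Adj b c → G.Adj c d →
    a ≠ c → b ≠ d → a ≠ d → (f6 a ≠ f6 c ∨ f6 b ≠ f6 d) := by decide

theorem card_lemma : ∀ x y z w : Fin 6, x ≠ y → y ≠ z → z ≠ w → (x ≠ z ∨ y ≠ w) →
    3 ≤ (insert x (insert y (insert z (insert w (∅ : Finset (Fin 6)))))).card := by decide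

theorem upper : G.IsStarColoring f6 := by
  constructor
  · exact f6_proper
  · intro u v p hp hl
    cases p with
    | nil => simp at hl
    | cons h1 q =>
      cases q with
      | nil => simp at hl
      | cons h2 r =>
        cases r with
        | nil => simp at hl
        | cons h3 s =>
          cases s with
          | cons h4 t => simp [Walk.length_cons] at hl
          | nil =>
            rename_i b c
            rw [Walk.isPath_def] at hp
            simp only [Walk.support_cons, Walk.support_nil] at hp
            simp only [List.nodup_cons, List.mem_cons, List.mem_singleton,
              List.not_mem_nil, or_false, List.nodup_nil, and_true,
              List.mem_nil_iff] at hp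
            push_neg at hp
            simp only [Walk.support_cons, Walk.support_nil, List.map_cons, List.map_nil,
              List.toFinset_cons, List.toFinset_nil]
            exact card_lemma _ _ _ _ (f6_proper h1) (f6_proper h2) (f6_proper h3)
              (f6_quad _ _ _ _ h1 h2 h3 hp.1.2.1 hp.2.1.2 hp.1.2.2)

theorem six_mem : (6 : ℕ) ∈ {n : ℕ | ∃ f : V → Fin n, G.IsStarColoring f} :=
  ⟨f6, upper⟩

theorem lower {n : ℕ} (hn : n ≤ 5) (f : V → Fin n) (hf : G.IsStarColoring f) : False := by
  set a : Fin 5 := Fin.castLE hn (f (0, 0)) with hadef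
  set b : Fin 5 := Fin.castLE hn (f (1, 1)) with hbdef
  set c : Fin 5 := Fin.castLE hn (f (2, 2)) with hcdef
  have adj01 : G.Adj (0, 0) (1, 1) := by decide
  have adj12 : G.Adj (1, 1) (2, 2) := by decide
  have adj02 : G.Adj (0, 0) (2, 2) := by decide
  have hinj := Fin.castLE_injective hn
  have hab : a ≠ b := fun h => hf.1 adj01 (hinj h)
  have hbc : b ≠ c := fun h => hf.1 adj12 (hinj h)
  have hac : a ≠ c := fun h => hf.1 adj02 (hinj h)
  set s1 : Equiv.Perm (Fin 5) := Equiv.swap a 0 with hs1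
  set s2 : Equiv.Perm (Fin 5) := Equiv.swap (s1 b) 1 with hs2
  set s3 : Equiv.Perm (Fin 5) := Equiv.swap (s2 (s1 c)) 2 with hs3
  set sigma : Equiv.Perm (Fin 5) := s1.trans (s2.trans s3) with hsig
  set g : V → ℕ := fun v => (sigma (Fin.castLE hn (f v))).val with hg
  -- key equalities
  have hs1a : s1 a = 0 := Equiv.swap_apply_left a 0
  have hs1b0 : s1 b ≠ 0 := by rw [← hs1a]; exact fun h => hab (s1.injective h).symm
  have hs1c0 : s1 c ≠ 0 := by rw [← hs1a]; exact fun h => hac (s1.injective h).symm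
  have hs2a : s2 (s1 a) = 0 := by
    rw [hs1a]
    exact Equiv.swap_apply_of_ne_of_ne (Ne.symm hs1b0) (by decide)
  have hs2b : s2 (s1 b) = 1 := Equiv.swap_apply_left _ _
  have hs2c1 : s2 (s1 c) ≠ 1 := by
    rw [← hs2b]; exact fun h => hbc (s1.injective (s2.injective h)).symm
  have hs2c0 : s2 (s1 c) ≠ 0 := by
    rw [← hs2a]; exact fun h => hac (s1.injective (s2.injective h)).symm
  have hga : g (0, 0) = 0 := by
    show (s3 (s2 (s1 a))).val = 0
    rw [hs2a, Equiv.swap_apply_of_ne_of_ne (Ne.symm hs2c0) (by decide)]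
    rfl
  have hgb : g (1, 1) = 1 := by
    show (s3 (s2 (s1 b))).val = 1
    rw [hs2b, Equiv.swap_apply_of_ne_of_ne (Ne.symm hs2c1) (by decide)]
    rfl
  have hgc : g (2, 2) = 2 := by
    show (s3 (s2 (s1 c))).val = 2
    rw [Equiv.swap_apply_left]
    rfl
  have hgeq : ∀ u v : V, g u = g v ↔ f u = f v := by
    intro u v
    constructor
    · intro h
      exact hinj (sigma.injective (Fin.val_injective h))
    · intro h; rw [hg]; simp [h]
  have hrange : ∀ v, g v < 5 := fun v => (sigma (Fin.castLE hn (f v))).isLt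
  have h2 : ∀ (k : Fin 9), ∀ p ∈ edgesAt k.val, g (dec9 p.1) ≠ g (dec9 p.2) := by
    intro k p hp h
    exact hf.1 (edgesSpec k p hp) (hinj (sigma.injective (Fin.val_injective h)))
  have h4 : ∀ (k : Fin 9), ∀ q ∈ quadsAt k.val,
      ¬(g (dec9 q.1) = g (dec9 q.2.2.1) ∧ g (dec9 q.2.1) = g (dec9 q.2.2.2)) := by
    intro k q hq ⟨e1, e2⟩
    obtain ⟨q1, q2, q3, q4, q5, q6⟩ := quadsSpec k q hq
    exact star_quad hf q1 q2 q3 q4 q5 q6 ⟨(hgeq _ _).1 e1, (hgeq _ _).1 e2⟩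
  have hkey : ext 6 [0, 1, 2] = true := by
    apply ext_complete g h2 h4 hrange 6 [0, 1, 2] (by simp)
    intro i x hx
    match i with
    | 0 => refine ⟨by omega, ?_⟩; injection hx with hx; rw [← hx]; show (0:ℕ) = g (0,0); rw [hga]
    | 1 => refine ⟨by omega, ?_⟩; injection hx with hx; rw [← hx]; show (1:ℕ) = g (1,1); rw [hgb]
    | 2 => refine ⟨by omega, ?_⟩; injection hx with hx; rw [← hx]; show (2:ℕ) = g (2,2); rw [hgc]
    | (m+3) => simp at hx
  rw [ext_false] at hkey
  exact absurd hkey (by simp)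

end StarAux

open StarAux in
theorem starChromaticNumber_C3_tensorProd_C3 :
    ((cycleGraph 3).tensorProd (cycleGraph 3)).starChromaticNumber = 6 := by
  have hmem := six_mem
  apply le_antisymm
  · exact Nat.sInf_le hmem
  · apply le_csInf ⟨6, hmem⟩
    intro n hn
    by_contra hlt
    push_neg at hlt
    obtain ⟨f, hf⟩ := hn
    exact lower (by omega) f hf
end

section
/- For every integer n ≥ 4, the star chromatic number of the tensor product satisfies χ_s(C_4 × C_n) = 5. -/
open SimpleGraph

namespace StarAux

lemma fin4_contra : ∀ a b c d e : Fin 4, a = b ∨ a = c ∨ a = d ∨ a = e ∨ b = c ∨ b = d ∨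
    b = e ∨ c = d ∨ c = e ∨ d = e := by decide

lemma fin4_cover : ∀ a b c d x : Fin 4, a≠b → a≠c → a≠d → b≠c → b≠d → c≠d →
    x≠c → x≠d → x = a ∨ x = b := by decide

lemma rowflip : ∀ r s : Fin 4, (s = r + 1 ∨ s = r + 3) → (r = s + 1 ∨ r = s + 3) := by decide

lemma rowplus2 : ∀ r s t : Fin 4, s = r + 2 → (t = s + 1 ∨ t = s + 3) →
    (t = r + 1 ∨ t = r + 3) := by decide

lemma row2 : ∀ r1 r2 r3 : Fin 4, (r2 = r1 + 1 ∨ r2 = r1 + 3) → (r3 = r2 + 1 ∨ r3 = r2 + 3) →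
    r3 ≠ r1 → r3 = r1 + 2 := by decide

section Generic
variable {α : Type*} {G : SimpleGraph α} {k : ℕ} {f : α → Fin k}

lemma no_alt (hf : G.IsStarColoring f) {v0 v1 v2 v3 : α}
    (h01 : G.Adj v0 v1) (h12 : G.Adj v1 v2) (h23 : G.Adj v2 v3)
    (d02 : v0 ≠ v2) (d13 : v1 ≠ v3) (d03 : v0 ≠ v3)
    (e02 : f v0 = f v2) (e13 : f v1 = f v3) : False := by
  set w : G.Walk v0 v3 := .cons h01 (.cons h12 (.cons h23 .nil)) with hw
  have hpath : w.IsPath := by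
    rw [Walk.isPath_def, hw]
    simp only [Walk.support_cons, Walk.support_nil]
    simp [h01.ne, h12.ne, h23.ne, d02, d13, d03]
  have h3 := hf.2 _ _ w hpath (by simp [hw])
  have hs : w.support = [v0, v1, v2, v3] := by simp [hw]
  rw [hs] at h3
  have hsub : (([v0,v1,v2,v3]).map f).toFinset ⊆ {f v0, f v1} := by
    intro x hx
    simp only [List.map_cons, List.map_nil, List.mem_toFinset, List.mem_cons,
      List.not_mem_nil, or_false] at hx
    simp only [Finset.mem_insert, Finset.mem_singleton]
    rcases hx with h|h|h|h
    · left; exact h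
    · right; exact h
    · left; exact h.trans e02.symm
    · right; exact h.trans e13.symm
  have h2 : ({f v0, f v1} : Finset (Fin k)).card ≤ 2 := by
    apply le_trans (Finset.card_insert_le _ _); simp
  have := (Finset.card_le_card hsub).trans h2
  omega

lemma star_of (hcol : ∀ ⦃u v : α⦄, G.Adj u v → f u ≠ f v)
    (h : ∀ v0 v1 v2 v3 : α, G.Adj v0 v1 → G.Adj v1 v2 → G.Adj v2 v3 → v0 ≠ v2 → v1 ≠ v3 →
      f v0 = f v2 → f v1 = f v3 → False) :
    G.IsStarColoring f := by
  refine ⟨hcol, ?_⟩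
  intro u v p hp hl
  cases p with
  | nil => simp at hl
  | cons h1 q =>
    cases q with
    | nil => simp at hl
    | cons h2 q =>
      cases q with
      | nil => simp at hl
      | cons h3 q =>
        cases q with
        | cons h4 q => simp [Walk.length_cons] at hl
        | nil =>
          rename_i b c
          rw [Walk.isPath_def] at hp
          simp only [Walk.support_cons, Walk.support_nil, List.nodup_cons, List.mem_cons,
            List.mem_singleton, List.not_mem_nil, or_false, not_or, List.nodup_nil,
            and_true] at hp
          obtain ⟨⟨hub, huc, huv⟩, ⟨hbc, hbv⟩, hcv⟩ := hp
          simp only [Walk.support_cons, Walk.support_nil, List.map_cons, List.map_nil]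
          by_cases hac : f u = f c
          · have hbd : f b ≠ f v := fun e => h u b c v h1 h2 h3 huc hbv hac e
            have hsub : ({f u, f b, f v} : Finset (Fin k)) ⊆ ([f u, f b, f c, f v]).toFinset := by
              intro x hx
              simp only [Finset.mem_insert, Finset.mem_singleton] at hx
              simp only [List.mem_toFinset, List.mem_cons, List.not_mem_nil, or_false]
              tauto
            have hcard : ({f u, f b, f v} : Finset (Fin k)).card = 3 := by
              rw [Finset.card_insert_of_notMem (by
                    simp only [Finset.mem_insert, Finset.mem_singleton, not_or]
                    exact ⟨hcol h1, hac ▸ hcol h3⟩),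
                  Finset.card_insert_of_notMem (by simpa using hbd), Finset.card_singleton]
            exact hcard ▸ Finset.card_le_card hsub
          · have hsub : ({f u, f b, f c} : Finset (Fin k)) ⊆ ([f u, f b, f c, f v]).toFinset := by
              intro x hx
              simp only [Finset.mem_insert, Finset.mem_singleton] at hx
              simp only [List.mem_toFinset, List.mem_cons, List.not_mem_nil, or_false]
              tauto
            have hcard : ({f u, f b, f c} : Finset (Fin k)).card = 3 := by
              rw [Finset.card_insert_of_notMem (by
                    simp only [Finset.mem_insert, Finset.mem_singleton, not_or]
                    exact ⟨hcol h1, hac⟩),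
                  Finset.card_insert_of_notMem (by simpa using hcol h2), Finset.card_singleton]
            exact hcard ▸ Finset.card_le_card hsub

lemma star_mono {l : ℕ} (hkl : k ≤ l) (hf : G.IsStarColoring f) :
    G.IsStarColoring (Fin.castLE hkl ∘ f) := by
  have hinj : Function.Injective (Fin.castLE hkl) := fun a b e =>
    Fin.ext (by simpa using congrArg Fin.val e)
  constructor
  · intro u v huv e
    exact hf.1 huv (hinj e)
  · intro u v p hp hl
    have h3 := hf.2 u v p hp hl
    have hset : (p.support.map (Fin.castLE hkl ∘ f)).toFinset
        = (p.support.map f).toFinset.image (Fin.castLE hkl) := by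
      ext x; simp [Function.comp]
    rw [hset, Finset.card_image_of_injective _ hinj]
    exact h3

end Generic
end StarAux

namespace StarAux

lemma fin4_sub1 : ∀ a : Fin 4, a - 1 = a + 3 := by decide
lemma fin4_sub1' : ∀ a : Fin 4, a - (a + 3) = 1 := by decide

open Fin.CommRing in
lemma adj_iff (m : ℕ) (u v : Fin 4 × Fin (m+4)) :
    ((cycleGraph 4).tensorProd (cycleGraph (m+4))).Adj u v ↔
      ((v.1 = u.1 + 1 ∨ v.1 = u.1 + 3) ∧ (v.2 = u.2 + 1 ∨ v.2 = u.2 - 1)) := by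
  show (cycleGraph 4).Adj u.1 v.1 ∧ (cycleGraph (m+4)).Adj u.2 v.2 ↔ _
  rw [cycleGraph_adj, cycleGraph_adj]
  constructor
  · rintro ⟨h1, h2⟩
    constructor
    · rcases h1 with h | h
      · right
        have : v.1 = u.1 - 1 := by rw [← h]; ring
        rw [this, fin4_sub1]
      · left
        rw [← h]; ring
    · rcases h2 with h | h
      · right
        rw [← h]; ring
      · left
        rw [← h]; ring
  · rintro ⟨h1, h2⟩
    constructor
    · rcases h1 with h | h
      · right; rw [h]; ring
      · left; rw [h]; exact fin4_sub1' u.1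
    · rcases h2 with h | h
      · right; rw [h]; ring
      · left; rw [h]; ring

lemma val_up {m : ℕ} {j j' : Fin (m+4)} (h : j' = j + 1) {y : ℕ} (hy : j.val = y % (m+4)) :
    j'.val = (y+1) % (m+4) := by
  subst h
  rw [Fin.val_add, Fin.val_one, hy, Nat.add_mod y 1,
    Nat.mod_eq_of_lt (show 1 < m+4 by omega)]

open Fin.CommRing in
lemma val_down {m : ℕ} {j j' : Fin (m+4)} (h : j' = j - 1) {y : ℕ}
    (hy : j.val = (y+1) % (m+4)) : j'.val = y % (m+4) := by
  have hj : j = j' + 1 := by rw [h]; ring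
  have h1 : j.val = (j'.val + 1) % (m+4) := val_up hj (Nat.mod_eq_of_lt j'.isLt).symm
  have h2 : (j'.val + 1) % (m+4) = (y + 1) % (m+4) := h1.symm.trans hy
  have h3 : j'.val % (m+4) = y % (m+4) := Nat.ModEq.add_right_cancel' 1 h2
  rw [Nat.mod_eq_of_lt j'.isLt] at h3
  exact h3

open Fin.CommRing in
lemma master (m : ℕ) (C : ℕ → Fin 4 → Fin 5)
    (hmod : ∀ x, C (x % (m+4)) = C x)
    (HP : ∀ (x : ℕ) (r r' : Fin 4), (r' = r + 1 ∨ r' = r + 3) → C x r ≠ C (x+1) r')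
    (H1 : ∀ (x : ℕ) (r a b : Fin 4), (a = r + 1 ∨ a = r + 3) → (b = r + 1 ∨ b = r + 3) →
      C (x+1) r = C (x+1) (r+2) → C x a ≠ C (x+2) b)
    (H2 : ∀ (x : ℕ) (r r' : Fin 4), (r' = r + 1 ∨ r' = r + 3) →
      C x r = C x (r+2) → C (x+1) r' ≠ C (x+1) (r'+2))
    (H4 : ∀ (x : ℕ) (r0 r1 r2 r3 : Fin 4), (r1 = r0 + 1 ∨ r1 = r0 + 3) →
      (r2 = r1 + 1 ∨ r2 = r1 + 3) → (r3 = r2 + 1 ∨ r3 = r2 + 3) →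
      C x r0 = C (x+2) r2 → C (x+1) r1 = C (x+3) r3 → False) :
    ((cycleGraph 4).tensorProd (cycleGraph (m+4))).IsStarColoring
      (fun v => C v.2.val v.1) := by
  apply star_of
  · rintro ⟨ru, ju⟩ ⟨rv, jv⟩ huv
    rw [adj_iff] at huv
    obtain ⟨hr, hj⟩ := huv
    replace hr : rv = ru + 1 ∨ rv = ru + 3 := hr
    replace hj : jv = ju + 1 ∨ jv = ju - 1 := hj
    show C ju.val ru ≠ C jv.val rv
    rcases hj with hj | hj
    · have hv : jv.val = (ju.val + 1) % (m+4) := val_up hj (Nat.mod_eq_of_lt ju.isLt).symm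
      rw [hv, hmod, ← hmod ju.val, Nat.mod_eq_of_lt ju.isLt]
      exact HP ju.val ru rv hr
    · have hv : ju.val = (jv.val + 1) % (m+4) :=
        val_up (show ju = jv + 1 by rw [hj]; ring) (Nat.mod_eq_of_lt jv.isLt).symm
      rw [hv, hmod]
      exact fun e => HP jv.val rv ru (rowflip _ _ hr) e.symm
  · rintro ⟨r0, j0⟩ ⟨r1, j1⟩ ⟨r2, j2⟩ ⟨r3, j3⟩ h01 h12 h23 d02 d13 e02 e13
    rw [adj_iff] at h01 h12 h23
    obtain ⟨hr01, hj01⟩ := h01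
    obtain ⟨hr12, hj12⟩ := h12
    obtain ⟨hr23, hj23⟩ := h23
    replace hr01 : r1 = r0 + 1 ∨ r1 = r0 + 3 := hr01
    replace hj01 : j1 = j0 + 1 ∨ j1 = j0 - 1 := hj01
    replace hr12 : r2 = r1 + 1 ∨ r2 = r1 + 3 := hr12
    replace hj12 : j2 = j1 + 1 ∨ j2 = j1 - 1 := hj12
    replace hr23 : r3 = r2 + 1 ∨ r3 = r2 + 3 := hr23
    replace hj23 : j3 = j2 + 1 ∨ j3 = j2 - 1 := hj23
    have e02' : C j0.val r0 = C j2.val r2 := e02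
    have e13' : C j1.val r1 = C j3.val r3 := e13
    clear e02 e13
    set x := j0.val + (m+4) with hxdef
    have hx0 : j0.val = x % (m+4) := by
      rw [hxdef, Nat.add_mod_right, Nat.mod_eq_of_lt j0.isLt]
    have hx4 : 4 ≤ x := by omega
    rcases hj01 with hA | hA <;> rcases hj12 with hB | hB <;> rcases hj23 with hC | hC
    · -- UUU
      have hy1 : j1.val = (x+1) % (m+4) := val_up hA hx0
      have hy2 : j2.val = (x+1+1) % (m+4) := val_up hB hy1
      have hy3 : j3.val = (x+1+1+1) % (m+4) := val_up hC hy2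
      rw [hx0, hy2] at e02'
      rw [hy1, hy3] at e13'
      simp only [hmod] at e02' e13'
      exact H4 x r0 r1 r2 r3 hr01 hr12 hr23 e02' e13'
    · -- UUD
      have hy1 : j1.val = (x+1) % (m+4) := val_up hA hx0
      have hy2 : j2.val = (x+1+1) % (m+4) := val_up hB hy1
      have hy3 : j3.val = (x+1) % (m+4) := val_down hC hy2
      have hj31 : j3 = j1 := by rw [hC, hB]; ring
      have hr31 : r3 ≠ r1 := fun h => d13 (Prod.ext_iff.mpr ⟨h.symm, hj31.symm⟩)
      have hr3 : r3 = r1 + 2 := row2 r1 r2 r3 hr12 hr23 hr31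
      rw [hx0, hy2] at e02'
      rw [hy1, hy3] at e13'
      simp only [hmod] at e02' e13'
      rw [hr3] at e13'
      exact H1 x r1 r0 r2 (rowflip _ _ hr01) hr12 e13' e02'
    · -- UDU
      have hy1 : j1.val = (x+1) % (m+4) := val_up hA hx0
      have hy2 : j2.val = x % (m+4) := val_down hB hy1
      have hy3 : j3.val = (x+1) % (m+4) := val_up hC hy2
      have hj20 : j2 = j0 := by rw [hB, hA]; ring
      have hj31 : j3 = j1 := by rw [hC, hB]; ring
      have hr20 : r2 ≠ r0 := fun h => d02 (Prod.ext_iff.mpr ⟨h.symm, hj20.symm⟩)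
      have hr31 : r3 ≠ r1 := fun h => d13 (Prod.ext_iff.mpr ⟨h.symm, hj31.symm⟩)
      have h2r : r2 = r0 + 2 := row2 r0 r1 r2 hr01 hr12 hr20
      have h3r : r3 = r1 + 2 := row2 r1 r2 r3 hr12 hr23 hr31
      rw [hx0, hy2] at e02'
      rw [hy1, hy3] at e13'
      simp only [hmod] at e02' e13'
      rw [h2r] at e02'
      rw [h3r] at e13'
      exact H2 x r0 r1 hr01 e02' e13'
    · -- UDD
      have hy1 : j1.val = (x+1) % (m+4) := val_up hA hx0
      have hy2 : j2.val = x % (m+4) := val_down hB hy1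
      have hxs : x - 1 + 1 = x := by omega
      have hy2' : j2.val = (x-1+1) % (m+4) := by rw [hxs]; exact hy2
      have hy3 : j3.val = (x-1) % (m+4) := val_down hC hy2'
      have hj20 : j2 = j0 := by rw [hB, hA]; ring
      have hr20 : r2 ≠ r0 := fun h => d02 (Prod.ext_iff.mpr ⟨h.symm, hj20.symm⟩)
      have h2r : r2 = r0 + 2 := row2 r0 r1 r2 hr01 hr12 hr20
      have hx0' : j0.val = (x-1+1) % (m+4) := by rw [hxs]; exact hx0
      rw [hx0', hy2'] at e02'
      rw [hy1, hy3] at e13'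
      simp only [hmod] at e02' e13'
      rw [h2r] at e02'
      have hconc := H1 (x-1) r0 r3 r1 (rowplus2 r0 r2 r3 h2r hr23) hr01 e02'
      rw [show x - 1 + 2 = x + 1 by omega] at hconc
      exact hconc e13'.symm
    · -- DUU
      have hxs : x - 1 + 1 = x := by omega
      have hx0' : j0.val = (x-1+1) % (m+4) := by rw [hxs]; exact hx0
      have hy1 : j1.val = (x-1) % (m+4) := val_down hA hx0'
      have hy2 : j2.val = (x-1+1) % (m+4) := val_up hB hy1
      have hy3 : j3.val = (x-1+1+1) % (m+4) := val_up hC hy2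
      have hj20 : j2 = j0 := by rw [hB, hA]; ring
      have hr20 : r2 ≠ r0 := fun h => d02 (Prod.ext_iff.mpr ⟨h.symm, hj20.symm⟩)
      have h2r : r2 = r0 + 2 := row2 r0 r1 r2 hr01 hr12 hr20
      rw [hx0', hy2] at e02'
      rw [hy1, hy3] at e13'
      simp only [hmod] at e02' e13'
      rw [h2r] at e02'
      exact H1 (x-1) r0 r1 r3 hr01 (rowplus2 r0 r2 r3 h2r hr23) e02' e13'
    · -- DUD
      have hxs : x - 1 + 1 = x := by omega
      have hx0' : j0.val = (x-1+1) % (m+4) := by rw [hxs]; exact hx0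
      have hy1 : j1.val = (x-1) % (m+4) := val_down hA hx0'
      have hy2 : j2.val = (x-1+1) % (m+4) := val_up hB hy1
      have hy3 : j3.val = (x-1) % (m+4) := val_down hC hy2
      have hj20 : j2 = j0 := by rw [hB, hA]; ring
      have hj31 : j3 = j1 := by rw [hC, hB]; ring
      have hr20 : r2 ≠ r0 := fun h => d02 (Prod.ext_iff.mpr ⟨h.symm, hj20.symm⟩)
      have hr31 : r3 ≠ r1 := fun h => d13 (Prod.ext_iff.mpr ⟨h.symm, hj31.symm⟩)
      have h2r : r2 = r0 + 2 := row2 r0 r1 r2 hr01 hr12 hr20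
      have h3r : r3 = r1 + 2 := row2 r1 r2 r3 hr12 hr23 hr31
      rw [hx0', hy2] at e02'
      rw [hy1, hy3] at e13'
      simp only [hmod] at e02' e13'
      rw [h2r] at e02'
      rw [h3r] at e13'
      exact H2 (x-1) r1 r0 (rowflip _ _ hr01) e13' e02'
    · -- DDU
      have hxs : x - 1 + 1 = x := by omega
      have hx0' : j0.val = (x-1+1) % (m+4) := by rw [hxs]; exact hx0
      have hy1 : j1.val = (x-1) % (m+4) := val_down hA hx0'
      have hxs2 : x - 2 + 1 = x - 1 := by omega
      have hy1' : j1.val = (x-2+1) % (m+4) := by rw [hxs2]; exact hy1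
      have hy2 : j2.val = (x-2) % (m+4) := val_down hB hy1'
      have hy3 : j3.val = (x-2+1) % (m+4) := val_up hC hy2
      have hj31 : j3 = j1 := by rw [hC, hB]; ring
      have hr31 : r3 ≠ r1 := fun h => d13 (Prod.ext_iff.mpr ⟨h.symm, hj31.symm⟩)
      have h3r : r3 = r1 + 2 := row2 r1 r2 r3 hr12 hr23 hr31
      rw [hx0, hy2] at e02'
      rw [hy1', hy3] at e13'
      simp only [hmod] at e02' e13'
      rw [h3r] at e13'
      have hconc := H1 (x-2) r1 r2 r0 hr12 (rowflip _ _ hr01) e13'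
      rw [show x - 2 + 2 = x by omega] at hconc
      exact hconc e02'.symm
    · -- DDD
      have hxs : x - 1 + 1 = x := by omega
      have hx0' : j0.val = (x-1+1) % (m+4) := by rw [hxs]; exact hx0
      have hy1 : j1.val = (x-1) % (m+4) := val_down hA hx0'
      have hxs2 : x - 2 + 1 = x - 1 := by omega
      have hy1' : j1.val = (x-2+1) % (m+4) := by rw [hxs2]; exact hy1
      have hy2 : j2.val = (x-2) % (m+4) := val_down hB hy1'
      have hxs3 : x - 3 + 1 = x - 2 := by omega
      have hy2' : j2.val = (x-3+1) % (m+4) := by rw [hxs3]; exact hy2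
      have hy3 : j3.val = (x-3) % (m+4) := val_down hC hy2'
      rw [hx0, hy2'] at e02'
      rw [hy1', hy3] at e13'
      simp only [hmod] at e02' e13'
      rw [show x - 2 + 1 = x - 3 + 2 by omega] at e13'
      have ha1 : C (x-3) r3 = C (x-3+2) r1 := by
        rw [show x - 3 + 2 = x - 2 + 1 by omega]
        exact e13'.symm
      have ha2 : C (x-3+1) r2 = C (x-3+3) r0 := by
        rw [show x - 3 + 3 = x by omega]
        exact e02'.symm
      exact H4 (x-3) r3 r2 r1 r0 (rowflip _ _ hr23) (rowflip _ _ hr12) (rowflip _ _ hr01) ha1 ha2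

end StarAux

namespace StarAux

def per (y : ℕ) : Fin 3 :=
  if y % 4 = 0 then 0 else if y % 4 = 1 then 1 else if y % 4 = 2 then 0 else 2

def Wb (n p : ℕ) : Fin 3 :=
  if n % 4 = 0 then per p
  else if n % 4 = 2 then (if p = n - 2 then 1 else if p = n - 1 then 2 else per p)
  else if n % 4 = 3 then (if p = n - 1 then 2 else per p)
  else (if p = n - 5 then 1 else if p = n - 4 then 0 else if p = n - 3 then 2 else
        if p = n - 2 then 1 else if p = n - 1 then 2 else per p)

def Wn (n x : ℕ) : Fin 3 := Wb n (x % n)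

abbrev Good (a b c d : Fin 3) : Prop := a ≠ b ∧ (b = 0 → a ≠ c) ∧ (a = c → b ≠ d)

lemma perWin (y : ℕ) : Good (per y) (per (y+1)) (per (y+2)) (per (y+3)) := by
  rcases (show y % 4 = 0 ∨ y % 4 = 1 ∨ y % 4 = 2 ∨ y % 4 = 3 by omega) with h|h|h|h <;>
    · simp only [per, h, show (y+1) % 4 = (y%4+1)%4 by omega, show (y+2) % 4 = (y%4+2)%4 by omega,
        show (y+3) % 4 = (y%4+3)%4 by omega]
      decide

lemma Wb0 {n : ℕ} (hc : n % 4 = 0) (p : ℕ) : Wb n p = per p := by simp [Wb, hc]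

lemma Wb2_per {n : ℕ} (hc : n % 4 = 2) {p : ℕ} (hp : p < n - 2) : Wb n p = per p := by
  simp [Wb, hc, show p ≠ n-2 by omega, show p ≠ n-1 by omega]

lemma Wb2_t0 {n : ℕ} (hc : n % 4 = 2) : Wb n (n-2) = 1 := by
  simp [Wb, hc]

lemma Wb2_t1 {n : ℕ} (hc : n % 4 = 2) : Wb n (n-1) = 2 := by
  simp [Wb, hc, show n-1 ≠ n-2 by omega]

lemma Wb3_per {n : ℕ} (hc : n % 4 = 3) {p : ℕ} (hp : p < n - 1) : Wb n p = per p := by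
  simp [Wb, hc, show p ≠ n-1 by omega]

lemma Wb3_t0 {n : ℕ} (hc : n % 4 = 3) : Wb n (n-1) = 2 := by
  simp [Wb, hc]

lemma Wb1_per {n : ℕ} (hc : n % 4 = 1) (h9 : 9 ≤ n) {p : ℕ} (hp : p < n - 5) :
    Wb n p = per p := by
  simp [Wb, hc, show p ≠ n-5 by omega, show p ≠ n-4 by omega, show p ≠ n-3 by omega,
    show p ≠ n-2 by omega, show p ≠ n-1 by omega]

lemma Wb1_t0 {n : ℕ} (hc : n % 4 = 1) (h9 : 9 ≤ n) : Wb n (n-5) = 1 := by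
  simp [Wb, hc]

lemma Wb1_t1 {n : ℕ} (hc : n % 4 = 1) (h9 : 9 ≤ n) : Wb n (n-4) = 0 := by
  simp [Wb, hc, show n-4 ≠ n-5 by omega]

lemma Wb1_t2 {n : ℕ} (hc : n % 4 = 1) (h9 : 9 ≤ n) : Wb n (n-3) = 2 := by
  simp [Wb, hc, show n-3 ≠ n-5 by omega, show n-3 ≠ n-4 by omega]

lemma Wb1_t3 {n : ℕ} (hc : n % 4 = 1) (h9 : 9 ≤ n) : Wb n (n-2) = 1 := by
  simp [Wb, hc, show n-2 ≠ n-5 by omega, show n-2 ≠ n-4 by omega, show n-2 ≠ n-3 by omega]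

lemma Wb1_t4 {n : ℕ} (hc : n % 4 = 1) (h9 : 9 ≤ n) : Wb n (n-1) = 2 := by
  simp [Wb, hc, show n-1 ≠ n-5 by omega, show n-1 ≠ n-4 by omega, show n-1 ≠ n-3 by omega,
    show n-1 ≠ n-2 by omega]

end StarAux

namespace StarAux

lemma perv0 (y : ℕ) (h : y % 4 = 0) : per y = 0 := by simp [per, h]
lemma perv1 (y : ℕ) (h : y % 4 = 1) : per y = 1 := by simp [per, h]
lemma perv2 (y : ℕ) (h : y % 4 = 2) : per y = 0 := by simp [per, h]
lemma perv3 (y : ℕ) (h : y % 4 = 3) : per y = 2 := by simp [per, h]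

lemma goodWb (n : ℕ) (hn : 4 ≤ n) (h5 : n ≠ 5) (p : ℕ) (hp : p < n) :
    Good (Wb n p) (Wb n ((p+1) % n)) (Wb n ((p+2) % n)) (Wb n ((p+3) % n)) := by
  rcases (show n % 4 = 0 ∨ n % 4 = 1 ∨ n % 4 = 2 ∨ n % 4 = 3 by omega) with hc|hc|hc|hc
  · -- class 0
    by_cases hb : p + 3 < n
    · rw [Nat.mod_eq_of_lt (show p + 1 < n by omega), Nat.mod_eq_of_lt (show p + 2 < n by omega),
        Nat.mod_eq_of_lt (show p + 3 < n by omega),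
        Wb0 hc (p), Wb0 hc (p + 1),
        Wb0 hc (p + 2), Wb0 hc (p + 3)]
      exact perWin p
    · rcases (show p = n - 3 ∨ p = n - 2 ∨ p = n - 1 by omega) with rfl|rfl|rfl
      · rw [show n - 3 + 1 = n - 2 by omega,
          Nat.mod_eq_of_lt (show n - 2 < n by omega),
          show n - 3 + 2 = n - 1 by omega,
          Nat.mod_eq_of_lt (show n - 1 < n by omega),
          show n - 3 + 3 = 0 + n by omega,
          Nat.add_mod_right,
          Nat.mod_eq_of_lt (show 0 < n by omega)]
        rw [Wb0 hc (n - 3),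
          Wb0 hc (n - 2),
          Wb0 hc (n - 1),
          Wb0 hc (0)]
        rw [perv1 (n - 3) (by omega),
          perv2 (n - 2) (by omega),
          perv3 (n - 1) (by omega),
          perv0 (0) (by omega)]
        decide
      · rw [show n - 2 + 1 = n - 1 by omega,
          Nat.mod_eq_of_lt (show n - 1 < n by omega),
          show n - 2 + 2 = 0 + n by omega,
          Nat.add_mod_right,
          Nat.mod_eq_of_lt (show 0 < n by omega),
          show n - 2 + 3 = 1 + n by omega,
          Nat.add_mod_right,
          Nat.mod_eq_of_lt (show 1 < n by omega)]
        rw [Wb0 hc (n - 2),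
          Wb0 hc (n - 1),
          Wb0 hc (0),
          Wb0 hc (1)]
        rw [perv2 (n - 2) (by omega),
          perv3 (n - 1) (by omega),
          perv0 (0) (by omega),
          perv1 (1) (by omega)]
        decide
      · rw [show n - 1 + 1 = 0 + n by omega,
          Nat.add_mod_right,
          Nat.mod_eq_of_lt (show 0 < n by omega),
          show n - 1 + 2 = 1 + n by omega,
          Nat.add_mod_right,
          Nat.mod_eq_of_lt (show 1 < n by omega),
          show n - 1 + 3 = 2 + n by omega,
          Nat.add_mod_right,
          Nat.mod_eq_of_lt (show 2 < n by omega)]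
        rw [Wb0 hc (n - 1),
          Wb0 hc (0),
          Wb0 hc (1),
          Wb0 hc (2)]
        rw [perv3 (n - 1) (by omega),
          perv0 (0) (by omega),
          perv1 (1) (by omega),
          perv2 (2) (by omega)]
        decide
  · -- class 1
    have h9 : 9 ≤ n := by omega
    by_cases hb : p + 3 < n - 5
    · rw [Nat.mod_eq_of_lt (show p + 1 < n by omega), Nat.mod_eq_of_lt (show p + 2 < n by omega),
        Nat.mod_eq_of_lt (show p + 3 < n by omega),
        Wb1_per hc h9 (show p < n - 5 by omega), Wb1_per hc h9 (show p + 1 < n - 5 by omega),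
        Wb1_per hc h9 (show p + 2 < n - 5 by omega), Wb1_per hc h9 (show p + 3 < n - 5 by omega)]
      exact perWin p
    · rcases (show p = n - 8 ∨ p = n - 7 ∨ p = n - 6 ∨ p = n - 5 ∨ p = n - 4 ∨ p = n - 3 ∨ p = n - 2 ∨ p = n - 1 by omega) with rfl|rfl|rfl|rfl|rfl|rfl|rfl|rfl
      · rw [show n - 8 + 1 = n - 7 by omega,
          Nat.mod_eq_of_lt (show n - 7 < n by omega),
          show n - 8 + 2 = n - 6 by omega,
          Nat.mod_eq_of_lt (show n - 6 < n by omega),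
          show n - 8 + 3 = n - 5 by omega,
          Nat.mod_eq_of_lt (show n - 5 < n by omega)]
        rw [Wb1_per hc h9 (show n - 8 < n - 5 by omega),
          Wb1_per hc h9 (show n - 7 < n - 5 by omega),
          Wb1_per hc h9 (show n - 6 < n - 5 by omega),
          Wb1_t0 hc h9]
        rw [perv1 (n - 8) (by omega),
          perv2 (n - 7) (by omega),
          perv3 (n - 6) (by omega)]
        decide
      · rw [show n - 7 + 1 = n - 6 by omega,
          Nat.mod_eq_of_lt (show n - 6 < n by omega),
          show n - 7 + 2 = n - 5 by omega,
          Nat.mod_eq_of_lt (show n - 5 < n by omega),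
          show n - 7 + 3 = n - 4 by omega,
          Nat.mod_eq_of_lt (show n - 4 < n by omega)]
        rw [Wb1_per hc h9 (show n - 7 < n - 5 by omega),
          Wb1_per hc h9 (show n - 6 < n - 5 by omega),
          Wb1_t0 hc h9,
          Wb1_t1 hc h9]
        rw [perv2 (n - 7) (by omega),
          perv3 (n - 6) (by omega)]
        decide
      · rw [show n - 6 + 1 = n - 5 by omega,
          Nat.mod_eq_of_lt (show n - 5 < n by omega),
          show n - 6 + 2 = n - 4 by omega,
          Nat.mod_eq_of_lt (show n - 4 < n by omega),
          show n - 6 + 3 = n - 3 by omega,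
          Nat.mod_eq_of_lt (show n - 3 < n by omega)]
        rw [Wb1_per hc h9 (show n - 6 < n - 5 by omega),
          Wb1_t0 hc h9,
          Wb1_t1 hc h9,
          Wb1_t2 hc h9]
        rw [perv3 (n - 6) (by omega)]
        decide
      · rw [show n - 5 + 1 = n - 4 by omega,
          Nat.mod_eq_of_lt (show n - 4 < n by omega),
          show n - 5 + 2 = n - 3 by omega,
          Nat.mod_eq_of_lt (show n - 3 < n by omega),
          show n - 5 + 3 = n - 2 by omega,
          Nat.mod_eq_of_lt (show n - 2 < n by omega)]
        rw [Wb1_t0 hc h9,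
          Wb1_t1 hc h9,
          Wb1_t2 hc h9,
          Wb1_t3 hc h9]
        decide
      · rw [show n - 4 + 1 = n - 3 by omega,
          Nat.mod_eq_of_lt (show n - 3 < n by omega),
          show n - 4 + 2 = n - 2 by omega,
          Nat.mod_eq_of_lt (show n - 2 < n by omega),
          show n - 4 + 3 = n - 1 by omega,
          Nat.mod_eq_of_lt (show n - 1 < n by omega)]
        rw [Wb1_t1 hc h9,
          Wb1_t2 hc h9,
          Wb1_t3 hc h9,
          Wb1_t4 hc h9]
        decide
      · rw [show n - 3 + 1 = n - 2 by omega,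
          Nat.mod_eq_of_lt (show n - 2 < n by omega),
          show n - 3 + 2 = n - 1 by omega,
          Nat.mod_eq_of_lt (show n - 1 < n by omega),
          show n - 3 + 3 = 0 + n by omega,
          Nat.add_mod_right,
          Nat.mod_eq_of_lt (show 0 < n by omega)]
        rw [Wb1_t2 hc h9,
          Wb1_t3 hc h9,
          Wb1_t4 hc h9,
          Wb1_per hc h9 (show 0 < n - 5 by omega)]
        rw [perv0 (0) (by omega)]
        decide
      · rw [show n - 2 + 1 = n - 1 by omega,
          Nat.mod_eq_of_lt (show n - 1 < n by omega),
          show n - 2 + 2 = 0 + n by omega,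
          Nat.add_mod_right,
          Nat.mod_eq_of_lt (show 0 < n by omega),
          show n - 2 + 3 = 1 + n by omega,
          Nat.add_mod_right,
          Nat.mod_eq_of_lt (show 1 < n by omega)]
        rw [Wb1_t3 hc h9,
          Wb1_t4 hc h9,
          Wb1_per hc h9 (show 0 < n - 5 by omega),
          Wb1_per hc h9 (show 1 < n - 5 by omega)]
        rw [perv0 (0) (by omega),
          perv1 (1) (by omega)]
        decide
      · rw [show n - 1 + 1 = 0 + n by omega,
          Nat.add_mod_right,
          Nat.mod_eq_of_lt (show 0 < n by omega),
          show n - 1 + 2 = 1 + n by omega,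
          Nat.add_mod_right,
          Nat.mod_eq_of_lt (show 1 < n by omega),
          show n - 1 + 3 = 2 + n by omega,
          Nat.add_mod_right,
          Nat.mod_eq_of_lt (show 2 < n by omega)]
        rw [Wb1_t4 hc h9,
          Wb1_per hc h9 (show 0 < n - 5 by omega),
          Wb1_per hc h9 (show 1 < n - 5 by omega),
          Wb1_per hc h9 (show 2 < n - 5 by omega)]
        rw [perv0 (0) (by omega),
          perv1 (1) (by omega),
          perv2 (2) (by omega)]
        decide
  · -- class 2
    by_cases hb : p + 3 < n - 2
    · rw [Nat.mod_eq_of_lt (show p + 1 < n by omega), Nat.mod_eq_of_lt (show p + 2 < n by omega),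
        Nat.mod_eq_of_lt (show p + 3 < n by omega),
        Wb2_per hc (show p < n - 2 by omega), Wb2_per hc (show p + 1 < n - 2 by omega),
        Wb2_per hc (show p + 2 < n - 2 by omega), Wb2_per hc (show p + 3 < n - 2 by omega)]
      exact perWin p
    · rcases (show p = n - 5 ∨ p = n - 4 ∨ p = n - 3 ∨ p = n - 2 ∨ p = n - 1 by omega) with rfl|rfl|rfl|rfl|rfl
      · rw [show n - 5 + 1 = n - 4 by omega,
          Nat.mod_eq_of_lt (show n - 4 < n by omega),
          show n - 5 + 2 = n - 3 by omega,
          Nat.mod_eq_of_lt (show n - 3 < n by omega),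
          show n - 5 + 3 = n - 2 by omega,
          Nat.mod_eq_of_lt (show n - 2 < n by omega)]
        rw [Wb2_per hc (show n - 5 < n - 2 by omega),
          Wb2_per hc (show n - 4 < n - 2 by omega),
          Wb2_per hc (show n - 3 < n - 2 by omega),
          Wb2_t0 hc]
        rw [perv1 (n - 5) (by omega),
          perv2 (n - 4) (by omega),
          perv3 (n - 3) (by omega)]
        decide
      · rw [show n - 4 + 1 = n - 3 by omega,
          Nat.mod_eq_of_lt (show n - 3 < n by omega),
          show n - 4 + 2 = n - 2 by omega,
          Nat.mod_eq_of_lt (show n - 2 < n by omega),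
          show n - 4 + 3 = n - 1 by omega,
          Nat.mod_eq_of_lt (show n - 1 < n by omega)]
        rw [Wb2_per hc (show n - 4 < n - 2 by omega),
          Wb2_per hc (show n - 3 < n - 2 by omega),
          Wb2_t0 hc,
          Wb2_t1 hc]
        rw [perv2 (n - 4) (by omega),
          perv3 (n - 3) (by omega)]
        decide
      · rw [show n - 3 + 1 = n - 2 by omega,
          Nat.mod_eq_of_lt (show n - 2 < n by omega),
          show n - 3 + 2 = n - 1 by omega,
          Nat.mod_eq_of_lt (show n - 1 < n by omega),
          show n - 3 + 3 = 0 + n by omega,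
          Nat.add_mod_right,
          Nat.mod_eq_of_lt (show 0 < n by omega)]
        rw [Wb2_per hc (show n - 3 < n - 2 by omega),
          Wb2_t0 hc,
          Wb2_t1 hc,
          Wb2_per hc (show 0 < n - 2 by omega)]
        rw [perv3 (n - 3) (by omega),
          perv0 (0) (by omega)]
        decide
      · rw [show n - 2 + 1 = n - 1 by omega,
          Nat.mod_eq_of_lt (show n - 1 < n by omega),
          show n - 2 + 2 = 0 + n by omega,
          Nat.add_mod_right,
          Nat.mod_eq_of_lt (show 0 < n by omega),
          show n - 2 + 3 = 1 + n by omega,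
          Nat.add_mod_right,
          Nat.mod_eq_of_lt (show 1 < n by omega)]
        rw [Wb2_t0 hc,
          Wb2_t1 hc,
          Wb2_per hc (show 0 < n - 2 by omega),
          Wb2_per hc (show 1 < n - 2 by omega)]
        rw [perv0 (0) (by omega),
          perv1 (1) (by omega)]
        decide
      · rw [show n - 1 + 1 = 0 + n by omega,
          Nat.add_mod_right,
          Nat.mod_eq_of_lt (show 0 < n by omega),
          show n - 1 + 2 = 1 + n by omega,
          Nat.add_mod_right,
          Nat.mod_eq_of_lt (show 1 < n by omega),
          show n - 1 + 3 = 2 + n by omega,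
          Nat.add_mod_right,
          Nat.mod_eq_of_lt (show 2 < n by omega)]
        rw [Wb2_t1 hc,
          Wb2_per hc (show 0 < n - 2 by omega),
          Wb2_per hc (show 1 < n - 2 by omega),
          Wb2_per hc (show 2 < n - 2 by omega)]
        rw [perv0 (0) (by omega),
          perv1 (1) (by omega),
          perv2 (2) (by omega)]
        decide
  · -- class 3
    by_cases hb : p + 3 < n - 1
    · rw [Nat.mod_eq_of_lt (show p + 1 < n by omega), Nat.mod_eq_of_lt (show p + 2 < n by omega),
        Nat.mod_eq_of_lt (show p + 3 < n by omega),
        Wb3_per hc (show p < n - 1 by omega), Wb3_per hc (show p + 1 < n - 1 by omega),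
        Wb3_per hc (show p + 2 < n - 1 by omega), Wb3_per hc (show p + 3 < n - 1 by omega)]
      exact perWin p
    · rcases (show p = n - 4 ∨ p = n - 3 ∨ p = n - 2 ∨ p = n - 1 by omega) with rfl|rfl|rfl|rfl
      · rw [show n - 4 + 1 = n - 3 by omega,
          Nat.mod_eq_of_lt (show n - 3 < n by omega),
          show n - 4 + 2 = n - 2 by omega,
          Nat.mod_eq_of_lt (show n - 2 < n by omega),
          show n - 4 + 3 = n - 1 by omega,
          Nat.mod_eq_of_lt (show n - 1 < n by omega)]
        rw [Wb3_per hc (show n - 4 < n - 1 by omega),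
          Wb3_per hc (show n - 3 < n - 1 by omega),
          Wb3_per hc (show n - 2 < n - 1 by omega),
          Wb3_t0 hc]
        rw [perv3 (n - 4) (by omega),
          perv0 (n - 3) (by omega),
          perv1 (n - 2) (by omega)]
        decide
      · rw [show n - 3 + 1 = n - 2 by omega,
          Nat.mod_eq_of_lt (show n - 2 < n by omega),
          show n - 3 + 2 = n - 1 by omega,
          Nat.mod_eq_of_lt (show n - 1 < n by omega),
          show n - 3 + 3 = 0 + n by omega,
          Nat.add_mod_right,
          Nat.mod_eq_of_lt (show 0 < n by omega)]
        rw [Wb3_per hc (show n - 3 < n - 1 by omega),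
          Wb3_per hc (show n - 2 < n - 1 by omega),
          Wb3_t0 hc,
          Wb3_per hc (show 0 < n - 1 by omega)]
        rw [perv0 (n - 3) (by omega),
          perv1 (n - 2) (by omega),
          perv0 (0) (by omega)]
        decide
      · rw [show n - 2 + 1 = n - 1 by omega,
          Nat.mod_eq_of_lt (show n - 1 < n by omega),
          show n - 2 + 2 = 0 + n by omega,
          Nat.add_mod_right,
          Nat.mod_eq_of_lt (show 0 < n by omega),
          show n - 2 + 3 = 1 + n by omega,
          Nat.add_mod_right,
          Nat.mod_eq_of_lt (show 1 < n by omega)]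
        rw [Wb3_per hc (show n - 2 < n - 1 by omega),
          Wb3_t0 hc,
          Wb3_per hc (show 0 < n - 1 by omega),
          Wb3_per hc (show 1 < n - 1 by omega)]
        rw [perv1 (n - 2) (by omega),
          perv0 (0) (by omega),
          perv1 (1) (by omega)]
        decide
      · rw [show n - 1 + 1 = 0 + n by omega,
          Nat.add_mod_right,
          Nat.mod_eq_of_lt (show 0 < n by omega),
          show n - 1 + 2 = 1 + n by omega,
          Nat.add_mod_right,
          Nat.mod_eq_of_lt (show 1 < n by omega),
          show n - 1 + 3 = 2 + n by omega,
          Nat.add_mod_right,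
          Nat.mod_eq_of_lt (show 2 < n by omega)]
        rw [Wb3_t0 hc,
          Wb3_per hc (show 0 < n - 1 by omega),
          Wb3_per hc (show 1 < n - 1 by omega),
          Wb3_per hc (show 2 < n - 1 by omega)]
        rw [perv0 (0) (by omega),
          perv1 (1) (by omega),
          perv2 (2) (by omega)]
        decide

end StarAux

namespace StarAux

lemma goodW (n : ℕ) (hn : 4 ≤ n) (h5 : n ≠ 5) (x : ℕ) :
    Good (Wn n x) (Wn n (x+1)) (Wn n (x+2)) (Wn n (x+3)) := by
  have h1 : (x+1) % n = (x % n + 1) % n := by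
    rw [Nat.add_mod x 1, Nat.mod_eq_of_lt (show 1 < n by omega)]
  have h2 : (x+2) % n = (x % n + 2) % n := by
    rw [Nat.add_mod x 2, Nat.mod_eq_of_lt (show 2 < n by omega)]
  have h3 : (x+3) % n = (x % n + 3) % n := by
    rw [Nat.add_mod x 3, Nat.mod_eq_of_lt (show 3 < n by omega)]
  show Good (Wb n (x % n)) (Wb n ((x+1) % n)) (Wb n ((x+2) % n)) (Wb n ((x+3) % n))
  rw [h1, h2, h3]
  exact goodWb n hn h5 (x % n) (Nat.mod_lt x (by omega))

def colL (l : Fin 3) (r : Fin 4) : Fin 5 :=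
  if l = 0 then 0 else if l = 1 then (if r.val ≤ 1 then 1 else 2)
  else (if r.val ≤ 1 then 3 else 4)

lemma colL_ne : ∀ a b : Fin 3, a ≠ b → ∀ r r' : Fin 4, colL a r ≠ colL b r' := by decide

lemma colL_twin_eq : ∀ (a : Fin 3) (r : Fin 4), colL a r = colL a (r+2) → a = 0 := by decide

lemma colL_twin_ne : ∀ a : Fin 3, a ≠ 0 → ∀ r : Fin 4, colL a r ≠ colL a (r+2) := by decide

lemma upper_general (m : ℕ) (h1 : m ≠ 1) :
    ((cycleGraph 4).tensorProd (cycleGraph (m+4))).IsStarColoring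
      (fun v => colL (Wn (m+4) v.2.val) v.1) := by
  have hn : 4 ≤ m + 4 := by omega
  have hne : m + 4 ≠ 5 := by omega
  have gw := goodW (m+4) hn hne
  apply master m (fun x r => colL (Wn (m+4) x) r)
  · intro x
    funext r
    show colL (Wb (m+4) (x % (m+4) % (m+4))) r = colL (Wb (m+4) (x % (m+4))) r
    rw [Nat.mod_mod_of_dvd x dvd_rfl]
  · intro x r r' _
    exact colL_ne _ _ (gw x).1 r r'
  · intro x r a b _ _ htw
    exact colL_ne _ _ ((gw x).2.1 (colL_twin_eq _ _ htw)) a b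
  · intro x r r' _ htw
    have h0 : Wn (m+4) x = 0 := colL_twin_eq _ _ htw
    have hne1 : Wn (m+4) (x+1) ≠ 0 := fun e => (gw x).1 (h0.trans e.symm)
    exact colL_twin_ne _ hne1 r'
  · intro x r0 r1 r2 r3 _ _ _ ha hb
    by_cases he : Wn (m+4) x = Wn (m+4) (x+2)
    · exact colL_ne _ _ ((gw x).2.2 he) r1 r3 hb
    · exact colL_ne _ _ he r0 r2 ha

def tab5 (x : ℕ) : Fin 4 → Fin 5 :=
  if x = 0 then ![1,1,4,1] else if x = 1 then ![3,2,0,2] else if x = 2 then ![3,2,0,2]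
  else if x = 3 then ![1,1,4,1] else ![4,3,2,0]

def C5 (x : ℕ) (r : Fin 4) : Fin 5 := tab5 (x % 5) r

lemma upper5 :
    ((cycleGraph 4).tensorProd (cycleGraph (1+4))).IsStarColoring
      (fun v => C5 v.2.val v.1) := by
  apply master 1 C5
  · intro x
    funext r
    show tab5 (x % 5 % 5) r = tab5 (x % 5) r
    rw [Nat.mod_mod_of_dvd x dvd_rfl]
  · intro x
    rcases (show x % 5 = 0 ∨ x % 5 = 1 ∨ x % 5 = 2 ∨ x % 5 = 3 ∨ x % 5 = 4 by omega)
      with h|h|h|h|h <;>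
    · revert h
      intro h
      simp only [C5, h, show (x+1) % 5 = (x % 5 + 1) % 5 by omega]
      decide
  · intro x
    rcases (show x % 5 = 0 ∨ x % 5 = 1 ∨ x % 5 = 2 ∨ x % 5 = 3 ∨ x % 5 = 4 by omega)
      with h|h|h|h|h <;>
    · revert h
      intro h
      simp only [C5, h, show (x+1) % 5 = (x % 5 + 1) % 5 by omega,
        show (x+2) % 5 = (x % 5 + 2) % 5 by omega]
      decide
  · intro x
    rcases (show x % 5 = 0 ∨ x % 5 = 1 ∨ x % 5 = 2 ∨ x % 5 = 3 ∨ x % 5 = 4 by omega)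
      with h|h|h|h|h <;>
    · revert h
      intro h
      simp only [C5, h, show (x+1) % 5 = (x % 5 + 1) % 5 by omega]
      decide
  · intro x
    rcases (show x % 5 = 0 ∨ x % 5 = 1 ∨ x % 5 = 2 ∨ x % 5 = 3 ∨ x % 5 = 4 by omega)
      with h|h|h|h|h <;>
    · revert h
      intro h
      simp only [C5, h, show (x+1) % 5 = (x % 5 + 1) % 5 by omega,
        show (x+2) % 5 = (x % 5 + 2) % 5 by omega, show (x+3) % 5 = (x % 5 + 3) % 5 by omega]
      decide

end StarAux

namespace StarAux

lemma fin4a : ∀ i : Fin 4, i + 1 = (i + 2) + 3 := by decide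
lemma fin4b : ∀ i : Fin 4, i + 3 = (i + 2) + 1 := by decide
lemma fin4c : ∀ i : Fin 4, i ≠ i + 2 := by decide
lemma fin4d : ∀ i : Fin 4, i + 1 ≠ i + 3 := by decide
lemma fin4e : ∀ i : Fin 4, i + 1 + 2 = i + 3 := by decide
lemma fin4f : ∀ i : Fin 4, i = (i + 1) + 3 := by decide
lemma fin4g : ∀ i : Fin 4, i = (i + 3) + 1 := by decide

open Fin.CommRing in
lemma lower_s9 (m : ℕ) (f : Fin 4 × Fin (m+4) → Fin 4)
    (hf : ((cycleGraph 4).tensorProd (cycleGraph (m+4))).IsStarColoring f) : False := by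
  set G := (cycleGraph 4).tensorProd (cycleGraph (m+4)) with hG
  have hadj : ∀ (r r' : Fin 4) (j j' : Fin (m+4)), (r' = r + 1 ∨ r' = r + 3) →
      (j' = j + 1 ∨ j' = j - 1) → G.Adj (r, j) (r', j') := by
    intro r r' j j' h1 h2
    rw [hG, adj_iff]
    exact ⟨h1, h2⟩
  have v1 : ((1 : Fin (m+4))).val = 1 := by simp
  have v2 : ((1+1 : Fin (m+4))).val = 2 := by
    rw [Fin.val_add, Fin.val_one]; exact Nat.mod_eq_of_lt (by omega)
  have v3 : ((1+1+1 : Fin (m+4))).val = 3 := by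
    rw [Fin.val_add, v2, Fin.val_one]; exact Nat.mod_eq_of_lt (by omega)
  have ne1 : (1 : Fin (m+4)) ≠ 0 := by
    intro h; have := congrArg Fin.val h; rw [v1] at this; simp at this
  have ne2 : (1+1 : Fin (m+4)) ≠ 0 := by
    intro h; have := congrArg Fin.val h; rw [v2] at this; simp at this
  have ne3 : (1+1+1 : Fin (m+4)) ≠ 0 := by
    intro h; have := congrArg Fin.val h; rw [v3] at this; simp at this
  have shift : ∀ (j a : Fin (m+4)), a ≠ 0 → j + a ≠ j := by
    intro j a ha h
    exact ha (add_left_cancel (h.trans (add_zero j).symm))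
  -- Step A : twins get distinct colors
  have twin : ∀ (i : Fin 4) (j : Fin (m+4)), f (i, j) ≠ f (i+2, j) := by
    intro i j heq
    have aA : G.Adj (i,j) (i+1, j+1) := hadj i (i+1) j (j+1) (Or.inl rfl) (Or.inl rfl)
    have aB : G.Adj (i,j) (i+3, j+1) := hadj i (i+3) j (j+1) (Or.inr rfl) (Or.inl rfl)
    have aC : G.Adj (i,j) (i+1, j-1) := hadj i (i+1) j (j-1) (Or.inl rfl) (Or.inr rfl)
    have aD : G.Adj (i,j) (i+3, j-1) := hadj i (i+3) j (j-1) (Or.inr rfl) (Or.inr rfl)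
    have aA' : G.Adj (i+2,j) (i+1, j+1) :=
      hadj (i+2) (i+1) j (j+1) (Or.inr (fin4a i)) (Or.inl rfl)
    have aB' : G.Adj (i+2,j) (i+3, j+1) :=
      hadj (i+2) (i+3) j (j+1) (Or.inl (fin4b i)) (Or.inl rfl)
    have aC' : G.Adj (i+2,j) (i+1, j-1) :=
      hadj (i+2) (i+1) j (j-1) (Or.inr (fin4a i)) (Or.inr rfl)
    have aD' : G.Adj (i+2,j) (i+3, j-1) :=
      hadj (i+2) (i+3) j (j-1) (Or.inl (fin4b i)) (Or.inr rfl)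
    have dcol1 : (j + 1 : Fin (m+4)) ≠ j := shift j 1 ne1
    have dcol2 : (j - 1 : Fin (m+4)) ≠ j := by
      intro h
      have h2 : j = j + 1 := by
        conv_lhs => rw [← sub_add_cancel j 1, h]
      exact shift j 1 ne1 h2.symm
    have dcol3 : (j + 1 : Fin (m+4)) ≠ j - 1 := by
      intro h
      have h2 : j + (1+1) = j := by
        rw [← add_assoc]
        calc j + 1 + 1 = j - 1 + 1 := by rw [h]
        _ = j := sub_add_cancel j 1
      exact shift j (1+1) ne2 h2
    have key : ∀ (u v : Fin 4 × Fin (m+4)), G.Adj (i,j) u → G.Adj (i,j) v →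
        G.Adj (i+2,j) v → u ≠ v → u.2 ≠ j → f u ≠ f v := by
      intro u v h1 h2 h3 huv huj e
      exact no_alt hf h1.symm h2 h3.symm huv
        (fun h => fin4c i (congrArg Prod.fst h))
        (fun h => huj (congrArg Prod.snd h)) e heq
    have dAB : f (i+1, j+1) ≠ f (i+3, j+1) :=
      key _ _ aA aB aB' (fun h => fin4d i (congrArg Prod.fst h)) dcol1
    have dAC : f (i+1, j+1) ≠ f (i+1, j-1) :=
      key _ _ aA aC aC' (fun h => dcol3 (congrArg Prod.snd h)) dcol1
    have dAD : f (i+1, j+1) ≠ f (i+3, j-1) :=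
      key _ _ aA aD aD' (fun h => fin4d i (congrArg Prod.fst h)) dcol1
    have dBC : f (i+3, j+1) ≠ f (i+1, j-1) :=
      key _ _ aB aC aC' (fun h => fin4d i (congrArg Prod.fst h).symm) dcol1
    have dBD : f (i+3, j+1) ≠ f (i+3, j-1) :=
      key _ _ aB aD aD' (fun h => dcol3 (congrArg Prod.snd h)) dcol1
    have dCD : f (i+1, j-1) ≠ f (i+3, j-1) :=
      key _ _ aC aD aD' (fun h => fin4d i (congrArg Prod.fst h)) dcol2
    have p0A : f (i,j) ≠ f (i+1, j+1) := hf.1 aA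
    have p0B : f (i,j) ≠ f (i+3, j+1) := hf.1 aB
    have p0C : f (i,j) ≠ f (i+1, j-1) := hf.1 aC
    have p0D : f (i,j) ≠ f (i+3, j-1) := hf.1 aD
    rcases fin4_contra (f (i,j)) (f (i+1,j+1)) (f (i+3,j+1)) (f (i+1,j-1)) (f (i+3,j-1))
      with h|h|h|h|h|h|h|h|h|h
    · exact p0A h
    · exact p0B h
    · exact p0C h
    · exact p0D h
    · exact dAB h
    · exact dAC h
    · exact dAD h
    · exact dBC h
    · exact dBD h
    · exact dCD h
  -- Step C2 : cover
  have cover : ∀ (i : Fin 4) (j : Fin (m+4)),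
      f (i, j+1+1) = f (i, j) ∨ f (i, j+1+1) = f (i+2, j) := by
    intro i j
    apply fin4_cover (f (i,j)) (f (i+2,j)) (f (i+1,j+1)) (f (i+3,j+1)) (f (i,j+1+1))
    · exact twin i j
    · exact hf.1 (hadj i (i+1) j (j+1) (Or.inl rfl) (Or.inl rfl))
    · exact hf.1 (hadj i (i+3) j (j+1) (Or.inr rfl) (Or.inl rfl))
    · exact hf.1 (hadj (i+2) (i+1) j (j+1) (Or.inr (fin4a i)) (Or.inl rfl))
    · exact hf.1 (hadj (i+2) (i+3) j (j+1) (Or.inl (fin4b i)) (Or.inl rfl))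
    · have t := twin (i+1) (j+1)
      rw [fin4e i] at t
      exact t
    · exact (hf.1 (hadj (i+1) i (j+1) (j+1+1) (Or.inr (fin4f i)) (Or.inl rfl))).symm
    · exact (hf.1 (hadj (i+3) i (j+1) (j+1+1) (Or.inl (fin4g i)) (Or.inl rfl))).symm
  -- Final alternating path
  set j0 : Fin (m+4) := 0 with hj0
  obtain ⟨i2, e2, hi2⟩ : ∃ i2 : Fin 4, f (i2, j0+1+1) = f (0, j0) ∧ (i2 = 0 ∨ i2 = 2) := by
    rcases cover 0 j0 with h | h
    · exact ⟨0, h, Or.inl rfl⟩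
    · have h2' := cover 2 j0
      rw [show (2:Fin 4) + 2 = 0 by decide] at h2'
      rcases h2' with h' | h'
      · exfalso
        have t := twin 0 (j0+1+1)
        rw [show (0:Fin 4) + 2 = 2 by decide] at t
        rw [show (0:Fin 4) + 2 = 2 by decide] at h
        exact t (h.trans h'.symm)
      · exact ⟨2, h', Or.inr rfl⟩
  obtain ⟨i3, e3, hi3⟩ : ∃ i3 : Fin 4, f (i3, j0+1+1+1) = f (1, j0+1) ∧ (i3 = 1 ∨ i3 = 3) := by
    rcases cover 1 (j0+1) with h | h
    · exact ⟨1, h, Or.inl rfl⟩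
    · have h2' := cover 3 (j0+1)
      rw [show (3:Fin 4) + 2 = 1 by decide] at h2'
      rcases h2' with h' | h'
      · exfalso
        have t := twin 1 (j0+1+1+1)
        rw [show (1:Fin 4) + 2 = 3 by decide] at t
        rw [show (1:Fin 4) + 2 = 3 by decide] at h
        exact t (h.trans h'.symm)
      · exact ⟨3, h', Or.inr rfl⟩
  have a1 : G.Adj (0, j0) (1, j0+1) :=
    hadj 0 1 j0 (j0+1) (Or.inl (by decide)) (Or.inl rfl)
  have a2 : G.Adj (1, j0+1) (i2, j0+1+1) := by
    rcases hi2 with rfl | rfl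
    · exact hadj 1 0 (j0+1) (j0+1+1) (Or.inr (by decide)) (Or.inl rfl)
    · exact hadj 1 2 (j0+1) (j0+1+1) (Or.inl (by decide)) (Or.inl rfl)
  have a3 : G.Adj (i2, j0+1+1) (i3, j0+1+1+1) := by
    rcases hi2 with rfl | rfl <;> rcases hi3 with rfl | rfl
    · exact hadj 0 1 (j0+1+1) (j0+1+1+1) (Or.inl (by decide)) (Or.inl rfl)
    · exact hadj 0 3 (j0+1+1) (j0+1+1+1) (Or.inr (by decide)) (Or.inl rfl)
    · exact hadj 2 1 (j0+1+1) (j0+1+1+1) (Or.inr (by decide)) (Or.inl rfl)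
    · exact hadj 2 3 (j0+1+1) (j0+1+1+1) (Or.inl (by decide)) (Or.inl rfl)
  have d02 : ((0 : Fin 4), j0) ≠ (i2, j0+1+1) := by
    intro h
    have hc := congrArg Prod.snd h
    simp only at hc
    exact shift j0 (1+1) ne2 (by rw [add_assoc] at hc; exact hc.symm)
  have d13 : ((1 : Fin 4), j0+1) ≠ (i3, j0+1+1+1) := by
    intro h
    have hc := congrArg Prod.snd h
    simp only at hc
    exact shift (j0+1) (1+1) ne2 (by rw [add_assoc, add_assoc] at hc; exact hc.symm)
  have d03 : ((0 : Fin 4), j0) ≠ (i3, j0+1+1+1) := by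
    intro h
    have hc := congrArg Prod.snd h
    simp only at hc
    exact shift j0 (1+1+1) ne3 (by
      rw [show j0 + (1+1+1) = j0+1+1+1 by ring]
      exact hc.symm)
  exact no_alt hf a1 a2 a3 d02 d13 d03 e2.symm e3.symm

end StarAux

open StarAux

theorem starChromaticNumber_C4_tensorProd_Cn (n : ℕ) (hn : 4 ≤ n) :
    ((cycleGraph 4).tensorProd (cycleGraph n)).starChromaticNumber = 5 := by
  obtain ⟨m, rfl⟩ : ∃ m, n = m + 4 := ⟨n - 4, by omega⟩
  have upper : ∃ f : Fin 4 × Fin (m+4) → Fin 5,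
      ((cycleGraph 4).tensorProd (cycleGraph (m+4))).IsStarColoring f := by
    by_cases h1 : m = 1
    · subst h1
      exact ⟨_, upper5⟩
    · exact ⟨_, upper_general m h1⟩
  obtain ⟨f5, hf5⟩ := upper
  rw [SimpleGraph.starChromaticNumber]
  refine le_antisymm (Nat.sInf_le ⟨f5, hf5⟩) ?_
  refine le_csInf ⟨5, f5, hf5⟩ ?_
  rintro b ⟨g, hg⟩
  by_contra hlt
  push_neg at hlt
  have hb4 : b ≤ 4 := by omega
  exact lower_s9 m _ (star_mono hb4 hg)
end

section
/- For all integers m ≥ 3, n ≥ 3, p ≥ 1, q ≥ 1 and k, if χ_s(C_m × C_n) ≤ k then χ_s(C_{pm} × C_{qn}) ≤ k. -/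
open SimpleGraph


private def redmod (m : ℕ) [NeZero m] {N : ℕ} (x : Fin N) : Fin m :=
  ⟨x.val % m, Nat.mod_lt _ (Nat.pos_of_neZero m)⟩

private lemma cast_mod_dvd {m N : ℕ} (a : ℕ) (hd : m ∣ N) :
    ((a % N : ℕ) : ZMod m) = (a : ZMod m) := by
  have h : a % N ≡ a [MOD m] := Nat.mod_mod_of_dvd a hd
  exact (ZMod.natCast_eq_natCast_iff _ _ _).mpr h

private lemma redmod_eq_iff {m N : ℕ} [NeZero m] {u v : Fin N} :
    redmod m u = redmod m v ↔ ((u.val : ZMod m) = (v.val : ZMod m)) := by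
  rw [Fin.ext_iff]
  show u.val % m = v.val % m ↔ _
  rw [ZMod.natCast_eq_natCast_iff]
  exact Iff.rfl

private lemma adjIff {N : ℕ} [NeZero N] (hN : 2 ≤ N) (u v : Fin N) :
    (cycleGraph N).Adj u v ↔ u = v + 1 ∨ v = u + 1 := by
  have hv1 : ((1 : Fin N)).val = 1 := by
    rw [Fin.val_one']; exact Nat.mod_eq_of_lt hN
  rw [cycleGraph_adj']
  have key : ∀ a b : Fin N, (a - b).val = 1 ↔ a = b + 1 := by
    intro a b
    rw [show ((a - b).val = 1 ↔ a - b = 1) by rw [Fin.ext_iff, hv1],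
      sub_eq_iff_eq_add, add_comm]
  rw [key, key]

private lemma psi_val_add_one {m N : ℕ} [NeZero N] (hd : m ∣ N) (u : Fin N) :
    (((u + 1 : Fin N)).val : ZMod m) = (u.val : ZMod m) + 1 := by
  rw [Fin.val_add, cast_mod_dvd _ hd, Nat.cast_add, Fin.val_one', cast_mod_dvd _ hd,
    Nat.cast_one]

private lemma nz_of_3le {m : ℕ} (hm : 3 ≤ m) : NeZero m := ⟨by omega⟩

private lemma zmod_cast_ne {m : ℕ} [NeZero m] (a : ℕ) (h1 : 0 < a) (h2 : a < m) :
    ((a : ZMod m)) ≠ 0 := by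
  intro h
  have := (ZMod.natCast_eq_zero_iff a m).mp h
  have := Nat.le_of_dvd h1 this
  omega

/-- adjacency in `cycleGraph m` on `Fin m` via `ZMod m` casts of values -/
private lemma adj_small_iff {m : ℕ} (hm : 3 ≤ m) {N : ℕ} (u v : Fin N) :
    haveI : NeZero m := nz_of_3le hm
    ((cycleGraph m).Adj (redmod m u) (redmod m v) ↔
      ((v.val : ZMod m) = (u.val : ZMod m) + 1 ∨ (u.val : ZMod m) = (v.val : ZMod m) + 1)) := by
  haveI : NeZero m := nz_of_3le hm
  rw [adjIff (by omega)]
  have key : ∀ a b : Fin N,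
      redmod m a = redmod m b + 1 ↔ ((a.val : ZMod m) = (b.val : ZMod m) + 1) := by
    intro a b
    have h1 : a.val % m = (b.val % m + 1 % m) % m ↔
        ((a.val : ZMod m) = ((b.val % m + 1 % m : ℕ) : ZMod m)) :=
      (ZMod.natCast_eq_natCast_iff _ _ _).symm
    rw [Fin.ext_iff, Fin.val_add, Fin.val_one']
    show a.val % m = (b.val % m + 1 % m) % m ↔ _
    rw [h1]
    push_cast [ZMod.natCast_mod]
    exact Iff.rfl
  rw [key, key]
  exact or_comm

private lemma eq_three_of {m : ℕ} [NeZero m] (hm : 3 ≤ m) (h : (3 : ZMod m) = 0) : m = 3 := by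
  have h3 : ((3 : ℕ) : ZMod m) = 0 := by push_cast; exact h
  have := Nat.le_of_dvd (by norm_num) ((ZMod.natCast_eq_zero_iff 3 m).mp h3)
  omega

private lemma psi_step {m N : ℕ} (hm : 3 ≤ m) (hd : m ∣ N) (hN : 0 < N) {u v : Fin N}
    (h : (cycleGraph N).Adj u v) :
    haveI : NeZero m := nz_of_3le hm
    ∃ e : ZMod m, (e = 1 ∨ e = -1) ∧ (v.val : ZMod m) = (u.val : ZMod m) + e := by
  haveI : NeZero m := nz_of_3le hm
  haveI : NeZero N := ⟨by omega⟩
  have hN2 : 2 ≤ N := by have := Nat.le_of_dvd hN hd; omega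
  rcases (adjIff hN2 u v).mp h with h' | h'
  · refine ⟨-1, Or.inr rfl, ?_⟩
    have h2 := psi_val_add_one hd v
    rw [← h'] at h2
    rw [h2]; ring
  · exact ⟨1, Or.inl rfl, by rw [h', psi_val_add_one hd]⟩

private lemma coordTwo {m N : ℕ} (hm : 3 ≤ m) (hd : m ∣ N) (hN : 0 < N) {u v w : Fin N}
    (h1 : (cycleGraph N).Adj u v) (h2 : (cycleGraph N).Adj v w) (hne : u ≠ w) :
    haveI : NeZero m := nz_of_3le hm
    redmod m u ≠ redmod m w := by
  haveI : NeZero m := nz_of_3le hm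
  haveI : NeZero N := ⟨by omega⟩
  have hN2 : 2 ≤ N := by have := Nat.le_of_dvd hN hd; omega
  intro heq
  rw [redmod_eq_iff] at heq
  have h2ne : (2 : ZMod m) ≠ 0 := by
    have := zmod_cast_ne (m := m) 2 (by omega) (by omega)
    push_cast at this; exact this
  rcases (adjIff hN2 u v).mp h1 with ha | ha <;> rcases (adjIff hN2 v w).mp h2 with hb | hb
  · rw [ha, hb, psi_val_add_one hd, psi_val_add_one hd] at heq
    exact h2ne (by linear_combination heq)
  · exact hne (ha.trans hb.symm)
  · exact hne (add_right_cancel (ha.symm.trans hb))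
  · rw [hb, ha, psi_val_add_one hd, psi_val_add_one hd] at heq
    exact h2ne (by linear_combination -heq)

private lemma coordThree {m N : ℕ} (hm : 3 ≤ m) (hd : m ∣ N) (hN : 0 < N) {u v w x : Fin N}
    (h1 : (cycleGraph N).Adj u v) (h2 : (cycleGraph N).Adj v w)
    (h3 : (cycleGraph N).Adj w x)
    (heq : (haveI : NeZero m := nz_of_3le hm; redmod m u = redmod m x)) :
    (cycleGraph m).Adj (haveI : NeZero m := nz_of_3le hm; redmod m u)
      (haveI : NeZero m := nz_of_3le hm; redmod m w) := by
  haveI : NeZero m := nz_of_3le hm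
  rw [redmod_eq_iff] at heq
  rw [adj_small_iff hm]
  obtain ⟨e1, he1, hs1⟩ := psi_step hm hd hN h1
  obtain ⟨e2, he2, hs2⟩ := psi_step hm hd hN h2
  obtain ⟨e3, he3, hs3⟩ := psi_step hm hd hN h3
  have h1ne : (1 : ZMod m) ≠ 0 := by
    have := zmod_cast_ne (m := m) 1 (by omega) (by omega)
    push_cast at this; exact this
  rw [hs2, hs1] at hs3 ⊢
  rw [hs3] at heq
  -- heq : ↑u = ↑u + e1 + e2 + e3
  rcases he1 with rfl | rfl <;> rcases he2 with rfl | rfl <;> rcases he3 with rfl | rfl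
  · -- +1+1+1 : 3 = 0, m = 3, goal with c = a + 2
    have hm3 : m = 3 := eq_three_of hm (by linear_combination -heq)
    subst hm3
    right
    have h30 : (3 : ZMod 3) = 0 := by decide
    linear_combination -h30
  · exact absurd (by linear_combination -heq) h1ne
  · exact absurd (by linear_combination -heq) h1ne
  · exact absurd (by linear_combination heq) h1ne
  · exact absurd (by linear_combination -heq) h1ne
  · exact absurd (by linear_combination heq) h1ne
  · exact absurd (by linear_combination heq) h1ne
  · have hm3 : m = 3 := eq_three_of hm (by linear_combination heq)
    subst hm3
    left
    have h30 : (3 : ZMod 3) = 0 := by decide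
    linear_combination -h30

private lemma hom_adj {m N : ℕ} (hm : 3 ≤ m) (hd : m ∣ N) (hN : 0 < N) {u v : Fin N}
    (h : (cycleGraph N).Adj u v) :
    (cycleGraph m).Adj (haveI : NeZero m := nz_of_3le hm; redmod m u)
      (haveI : NeZero m := nz_of_3le hm; redmod m v) := by
  haveI : NeZero m := nz_of_3le hm
  rw [adj_small_iff hm]
  obtain ⟨e, he, hs⟩ := psi_step hm hd hN h
  rcases he with rfl | rfl
  · exact Or.inl hs
  · exact Or.inr (by linear_combination -hs)

private lemma transfer {α β : Type*} {G : SimpleGraph α} {H : SimpleGraph β} (φ : α → β)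
    (hhom : ∀ {a b}, G.Adj a b → H.Adj (φ a) (φ b))
    (h2 : ∀ {a b c}, G.Adj a b → G.Adj b c → a ≠ c → φ a ≠ φ c)
    (h3 : ∀ {a b c d}, G.Adj a b → G.Adj b c → G.Adj c d → φ a = φ d → H.Adj (φ a) (φ c))
    {k : ℕ} {f : β → Fin k} (hf : H.IsStarColoring f) : G.IsStarColoring (f ∘ φ) := by
  constructor
  · intro a b hab h
    exact hf.1 (hhom hab) h
  · intro a b p hp hlen
    cases p with
    | nil => simp at hlen
    | cons h1 q =>
      cases q with
      | nil => simp at hlen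
      | cons hq2 r =>
        cases r with
        | nil => simp at hlen
        | cons hr3 s =>
          cases s with
          | cons h' s' => simp [SimpleGraph.Walk.length_cons] at hlen
          | nil =>
            rename_i x1 x2
            -- h1 : G.Adj a x1, hq2 : G.Adj x1 x2, hr3 : G.Adj x2 b
            rw [SimpleGraph.Walk.isPath_def] at hp
            simp [SimpleGraph.Walk.support_cons] at hp
            obtain ⟨⟨hax1, hax2, hab⟩, ⟨hx1x2, hx1b⟩, hx2b⟩ := hp
            by_cases hpd : φ a = φ b
            · have hADJ := h3 h1 hq2 hr3 hpd
              have c12 : f (φ a) ≠ f (φ x1) := hf.1 (hhom h1)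
              have c23 : f (φ x1) ≠ f (φ x2) := hf.1 (hhom hq2)
              have c13 : f (φ a) ≠ f (φ x2) := hf.1 hADJ
              have hcard : ({f (φ a), f (φ x1), f (φ x2)} : Finset (Fin k)).card = 3 :=
                Finset.card_eq_three.mpr ⟨_, _, _, c12, c13, c23, rfl⟩
              calc 3 = ({f (φ a), f (φ x1), f (φ x2)} : Finset (Fin k)).card := hcard.symm
                _ ≤ _ := by
                    apply Finset.card_le_card
                    intro y hy
                    simp only [Finset.mem_insert, Finset.mem_singleton] at hy
                    simp [SimpleGraph.Walk.support_cons]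
                    tauto
            · set W : H.Walk (φ a) (φ b) :=
                .cons (hhom h1) (.cons (hhom hq2) (.cons (hhom hr3) .nil)) with hW
              have hWpath : W.IsPath := by
                rw [SimpleGraph.Walk.isPath_def, hW]
                simp [SimpleGraph.Walk.support_cons]
                refine ⟨⟨(hhom h1).ne, h2 h1 hq2 hax2, hpd⟩, ⟨(hhom hq2).ne, h2 hq2 hr3 hx1b⟩,
                  (hhom hr3).ne⟩
              have hst := hf.2 _ _ W hWpath (by simp [hW])
              rw [hW] at hst
              simp [SimpleGraph.Walk.support_cons] at hst ⊢
              convert hst using 2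

private lemma exists_star {α : Type*} [Fintype α] [DecidableEq α] (G : SimpleGraph α) :
    ∃ f : α → Fin (Fintype.card α), G.IsStarColoring f := by
  refine ⟨Fintype.equivFin α, ?_, ?_⟩
  · intro u v huv h
    exact huv.ne (Equiv.injective _ h)
  · intro u v p hp hlen
    have hnd : (p.support.map (Fintype.equivFin α)).Nodup :=
      hp.support_nodup.map (Equiv.injective _)
    rw [List.toFinset_card_of_nodup hnd, List.length_map, SimpleGraph.Walk.length_support, hlen]
    omega

theorem starChromaticNumber_cycleGraph_tensorProd_mul_le (m n p q k : ℕ)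
    (hm : 3 ≤ m) (hn : 3 ≤ n) (hp : 1 ≤ p) (hq : 1 ≤ q)
    (h : ((cycleGraph m).tensorProd (cycleGraph n)).starChromaticNumber ≤ k) :
    ((cycleGraph (p * m)).tensorProd (cycleGraph (q * n))).starChromaticNumber ≤ k := by
  classical
  haveI : NeZero m := nz_of_3le hm
  haveI : NeZero n := nz_of_3le hn
  have hdm : m ∣ p * m := ⟨p, mul_comm p m⟩
  have hdn : n ∣ q * n := ⟨q, mul_comm q n⟩
  have hNm : 0 < p * m := by positivity
  have hNn : 0 < q * n := by positivity
  set S : Set ℕ :=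
    {n' | ∃ f : Fin m × Fin n → Fin n',
      ((cycleGraph m).tensorProd (cycleGraph n)).IsStarColoring f} with hS
  have hne : S.Nonempty := ⟨Fintype.card (Fin m × Fin n), exists_star _⟩
  have hmem : sInf S ∈ S := Nat.sInf_mem hne
  obtain ⟨f, hf⟩ := hmem
  set φ : Fin (p * m) × Fin (q * n) → Fin m × Fin n :=
    fun x => (redmod m x.1, redmod n x.2) with hφ
  have hstar : ((cycleGraph (p * m)).tensorProd (cycleGraph (q * n))).IsStarColoring (f ∘ φ) := by
    apply transfer φ ?_ ?_ ?_ hf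
    · intro a b hab
      exact ⟨hom_adj hm hdm hNm hab.1, hom_adj hn hdn hNn hab.2⟩
    · intro a b c hab hbc hac hqeq
      have h1 : redmod m a.1 = redmod m c.1 := congrArg Prod.fst hqeq
      have h2 : redmod n a.2 = redmod n c.2 := congrArg Prod.snd hqeq
      rcases (show a.1 ≠ c.1 ∨ a.2 ≠ c.2 by
        by_contra hcon; push_neg at hcon; exact hac (Prod.ext hcon.1 hcon.2)) with hd | hd
      · exact coordTwo hm hdm hNm hab.1 hbc.1 hd h1
      · exact coordTwo hn hdn hNn hab.2 hbc.2 hd h2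
    · intro a b c d hab hbc hcd heq
      exact ⟨coordThree hm hdm hNm hab.1 hbc.1 hcd.1 (congrArg Prod.fst heq),
        coordThree hn hdn hNn hab.2 hbc.2 hcd.2 (congrArg Prod.snd heq)⟩
  have hbig : sInf S ∈ {n' : ℕ | ∃ g : Fin (p * m) × Fin (q * n) → Fin n',
      ((cycleGraph (p * m)).tensorProd (cycleGraph (q * n))).IsStarColoring g} :=
    ⟨f ∘ φ, hstar⟩
  exact le_trans (Nat.sInf_le hbig) h
end

section
/- For every integer m ≥ 3, the star chromatic number of the tensor product of the cycle C_m with the path P_3 satisfies χ_s(C_m × P_3) = 3. -/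
open SimpleGraph

/-! ### Auxiliary arithmetic colorings -/

def gfun (m i : ℕ) : ℕ :=
  if (if m % 2 = 1 then m else m / 2) % 2 = 1 ∧
     (if m % 2 = 1 ∧ i % 2 = 1 then (m + i) / 2 else i / 2)
       = (if m % 2 = 1 then m else m / 2) - 1 then 2
  else (if m % 2 = 1 ∧ i % 2 = 1 then (m + i) / 2 else i / 2) % 2

def hfun (m i : ℕ) : ℕ :=
  (3 - gfun m ((i + 1) % m) - gfun m ((i + (m - 1)) % m)) % 3

lemma gfun_lt (m i : ℕ) : gfun m i < 3 := by
  unfold gfun; split_ifs <;> omega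

lemma hfun_lt (m i : ℕ) : hfun m i < 3 := Nat.mod_lt _ (by norm_num)

lemma mod_cases {a m : ℕ} (hm : 0 < m) (h : a < 2 * m) :
    a % m = if a < m then a else a - m := by
  split_ifs with h1
  · exact Nat.mod_eq_of_lt h1
  · rw [Nat.mod_eq_sub_mod (by omega)]
    exact Nat.mod_eq_of_lt (by omega)

lemma gfun_step (m : ℕ) (hm : 3 ≤ m) (a : ℕ) (ha : a < m) :
    gfun m a ≠ gfun m ((a + 2) % m) := by
  rw [mod_cases (by omega) (by omega)]
  unfold gfun
  split_ifs <;> omega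

/-- The two cycle-neighbours of `c` receive distinct `gfun`-colors. -/
lemma gfun_nbrs (m : ℕ) (hm : 3 ≤ m) (c : ℕ) :
    gfun m ((c + 1) % m) ≠ gfun m ((c + (m - 1)) % m) := by
  have ha : (c + (m - 1)) % m < m := Nat.mod_lt _ (by omega)
  have key : ((c + (m - 1)) % m + 2) % m = (c + 1) % m := by
    rw [Nat.mod_add_mod]
    have h2 : c + (m - 1) + 2 = (c + 1) + m := by omega
    rw [h2, Nat.add_mod_right]
  intro h
  exact gfun_step m hm _ ha (by rw [key]; exact h.symm)

lemma hfun_eq (m : ℕ) (hm : 3 ≤ m) (c : ℕ) :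
    hfun m c = 3 - gfun m ((c + 1) % m) - gfun m ((c + (m - 1)) % m) := by
  have h1 := gfun_lt m ((c + 1) % m)
  have h2 := gfun_lt m ((c + (m - 1)) % m)
  have h3 := gfun_nbrs m hm c
  unfold hfun
  omega

lemma hfun_ne_plus (m : ℕ) (hm : 3 ≤ m) (c : ℕ) :
    hfun m c ≠ gfun m ((c + 1) % m) := by
  have h1 := gfun_lt m ((c + 1) % m)
  have h2 := gfun_lt m ((c + (m - 1)) % m)
  have h3 := gfun_nbrs m hm c
  rw [hfun_eq m hm c]; omega

lemma hfun_ne_minus (m : ℕ) (hm : 3 ≤ m) (c : ℕ) :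
    hfun m c ≠ gfun m ((c + (m - 1)) % m) := by
  have h1 := gfun_lt m ((c + 1) % m)
  have h2 := gfun_lt m ((c + (m - 1)) % m)
  have h3 := gfun_nbrs m hm c
  rw [hfun_eq m hm c]; omega

/-! ### Fin-level lemmas about the cycle -/

lemma cyc_adj_val {m : ℕ} (hm : 3 ≤ m) {b c : Fin m} (h : (cycleGraph m).Adj b c) :
    b.val = (c.val + 1) % m ∨ b.val = (c.val + (m - 1)) % m := by
  rw [cycleGraph_adj'] at h
  have hb := b.isLt
  have hc := c.isLt
  rcases h with h | h
  · left
    rw [Fin.sub_def] at h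
    simp only at h
    rw [mod_cases (by omega) (by omega)] at h
    rw [mod_cases (by omega) (by omega)]
    split_ifs at h ⊢ <;> omega
  · right
    rw [Fin.sub_def] at h
    simp only at h
    rw [mod_cases (by omega) (by omega)] at h
    rw [mod_cases (by omega) (by omega)]
    split_ifs at h ⊢ <;> omega

/-- Two distinct neighbours of `c` in the cycle receive distinct `gfun`-colors. -/
lemma gfun_two_nbrs {m : ℕ} (hm : 3 ≤ m) {b c d : Fin m} (h1 : (cycleGraph m).Adj b c)
    (h2 : (cycleGraph m).Adj d c) (hbd : b ≠ d) :
    gfun m b.val ≠ gfun m d.val := by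
  have hb := cyc_adj_val hm h1
  have hd := cyc_adj_val hm h2
  have hne : b.val ≠ d.val := fun h => hbd (Fin.ext h)
  rcases hb with hb | hb <;> rcases hd with hd | hd
  · exact absurd (hb.trans hd.symm) hne
  · rw [hb, hd]; exact gfun_nbrs m hm c.val
  · rw [hb, hd]; exact (gfun_nbrs m hm c.val).symm
  · exact absurd (hb.trans hd.symm) hne

lemma gfun_ne_hfun {m : ℕ} (hm : 3 ≤ m) {b c : Fin m} (h : (cycleGraph m).Adj b c) :
    gfun m b.val ≠ hfun m c.val := by
  rcases cyc_adj_val hm h with hb | hb <;> rw [hb]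
  · exact (hfun_ne_plus m hm c.val).symm
  · exact (hfun_ne_minus m hm c.val).symm

/-! ### The coloring -/

def fcol (m : ℕ) (x : Fin m × Fin 3) : Fin 3 :=
  if x.2.val = 1 then ⟨gfun m x.1.val, gfun_lt m _⟩ else ⟨hfun m x.1.val, hfun_lt m _⟩

lemma fcol_mid {m : ℕ} {x : Fin m × Fin 3} (h : x.2.val = 1) :
    (fcol m x).val = gfun m x.1.val := by simp [fcol, h]

lemma fcol_out {m : ℕ} {x : Fin m × Fin 3} (h : x.2.val ≠ 1) :
    (fcol m x).val = hfun m x.1.val := by simp [fcol, h]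

lemma layer_alt {j k : Fin 3} (h : (pathGraph 3).Adj j k) :
    (j.val = 1 ↔ ¬ k.val = 1) := by
  rw [pathGraph_adj] at h
  have := j.isLt; have := k.isLt
  omega

/-! ### Generic helpers -/

lemma walk_len3 {α : Type*} {G : SimpleGraph α} {u v : α} (p : G.Walk u v)
    (hlen : p.length = 3) :
    ∃ (w1 w2 : α), ∃ (_ : G.Adj u w1) (_ : G.Adj w1 w2) (_ : G.Adj w2 v),
      p.support = [u, w1, w2, v] := by
  cases p with
  | nil => simp at hlen
  | cons h1 q =>
    cases q with
    | nil => simp at hlen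
    | cons h2 r =>
      cases r with
      | nil => simp at hlen
      | cons h3 s =>
        cases s with
        | nil => exact ⟨_, _, h1, h2, h3, by simp⟩
        | cons h4 t => simp [SimpleGraph.Walk.length_cons] at hlen

lemma three_le_card_toFinset {β : Type*} [DecidableEq β] {l : List β} {a b c : β}
    (ha : a ∈ l) (hb : b ∈ l) (hc : c ∈ l) (hab : a ≠ b) (hac : a ≠ c) (hbc : b ≠ c) :
    3 ≤ l.toFinset.card := by
  have hsub : ({a, b, c} : Finset β) ⊆ l.toFinset := by
    intro x hx
    simp only [Finset.mem_insert, Finset.mem_singleton] at hx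
    rcases hx with rfl | rfl | rfl <;> simpa [List.mem_toFinset]
  have hcard : ({a, b, c} : Finset β).card = 3 := by
    rw [Finset.card_insert_of_notMem (by simp [hab, hac]),
      Finset.card_insert_of_notMem (by simp [hbc]), Finset.card_singleton]
  calc 3 = ({a, b, c} : Finset β).card := hcard.symm
    _ ≤ _ := Finset.card_le_card hsub

/-! ### The coloring is a star coloring -/

lemma fcol_star {m : ℕ} (hm : 3 ≤ m) :
    ((cycleGraph m).tensorProd (pathGraph 3)).IsStarColoring (fcol m) := by
  constructor
  · rintro ⟨b, j⟩ ⟨c, k⟩ ⟨hbc, hjk⟩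
    have halt := layer_alt hjk
    by_cases hj : j.val = 1
    · have hk : ¬ k.val = 1 := halt.mp hj
      intro hEq
      have : (fcol m (b, j)).val = (fcol m (c, k)).val := by rw [hEq]
      rw [fcol_mid hj, fcol_out hk] at this
      exact gfun_ne_hfun hm hbc this
    · have hk : k.val = 1 := by tauto
      intro hEq
      have : (fcol m (c, k)).val = (fcol m (b, j)).val := by rw [hEq]
      rw [fcol_mid hk, fcol_out hj] at this
      exact gfun_ne_hfun hm hbc.symm this
  · intro u v p hpath hlen
    obtain ⟨w1, w2, h01, h12, h23, hsup⟩ := walk_len3 p hlen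
    have hnodup : ([u, w1, w2, v] : List _).Nodup := by
      rw [← hsup]; exact hpath.support_nodup
    rw [hsup]
    simp only [List.nodup_cons, List.mem_cons, List.not_mem_nil, or_false,
      List.mem_singleton, List.nodup_nil, and_true, not_or] at hnodup
    by_cases h1 : w1.2.val = 1
    · -- w1, w2, w3=v : middle, outer, middle
      have h2 : ¬ w2.2.val = 1 := (layer_alt h12.2).mp h1
      have h3 : v.2.val = 1 := by
        have := layer_alt h23.2; tauto
      -- w1 ≠ v
      have hne : w1 ≠ v := hnodup.2.1.2
      have hfne : w1.1 ≠ v.1 := by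
        intro hh
        apply hne
        have : w1.2 = v.2 := Fin.ext (by rw [h1, h3])
        exact Prod.ext hh this
      have hgg : gfun m w1.1.val ≠ gfun m v.1.val :=
        gfun_two_nbrs hm h12.1 h23.1.symm hfne
      have hgh1 : gfun m w1.1.val ≠ hfun m w2.1.val := gfun_ne_hfun hm h12.1
      have hgh3 : gfun m v.1.val ≠ hfun m w2.1.val := gfun_ne_hfun hm h23.1.symm
      refine three_le_card_toFinset (a := fcol m w1) (b := fcol m w2) (c := fcol m v)
        (by simp) (by simp) (by simp) ?_ ?_ ?_
      · intro hEq
        exact hgh1 (by rw [← fcol_mid h1, ← fcol_out h2, hEq])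
      · intro hEq
        exact hgg (by rw [← fcol_mid h1, ← fcol_mid h3, hEq])
      · intro hEq
        exact hgh3 (by rw [← fcol_mid h3, ← fcol_out h2, ← hEq])
    · -- u, w1, w2 : middle, outer, middle
      have h0 : u.2.val = 1 := by
        have := layer_alt h01.2; tauto
      have h2 : w2.2.val = 1 := by
        have := layer_alt h12.2; tauto
      have hne : u ≠ w2 := hnodup.1.2.1
      have hfne : u.1 ≠ w2.1 := by
        intro hh
        apply hne
        have : u.2 = w2.2 := Fin.ext (by rw [h0, h2])
        exact Prod.ext hh this
      have hgg : gfun m u.1.val ≠ gfun m w2.1.val :=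
        gfun_two_nbrs hm h01.1 h12.1.symm hfne
      have hgh1 : gfun m u.1.val ≠ hfun m w1.1.val := gfun_ne_hfun hm h01.1
      have hgh3 : gfun m w2.1.val ≠ hfun m w1.1.val := gfun_ne_hfun hm h12.1.symm
      refine three_le_card_toFinset (a := fcol m u) (b := fcol m w1) (c := fcol m w2)
        (by simp) (by simp) (by simp) ?_ ?_ ?_
      · intro hEq
        exact hgh1 (by rw [← fcol_mid h0, ← fcol_out h1, hEq])
      · intro hEq
        exact hgg (by rw [← fcol_mid h0, ← fcol_mid h2, hEq])
      · intro hEq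
        exact hgh3 (by rw [← fcol_mid h2, ← fcol_out h1, ← hEq])

/-! ### Lower bound -/

lemma cyc_adj_succ {m : ℕ} (hm : 3 ≤ m) (a : ℕ) (h : a + 1 < m) :
    (cycleGraph m).Adj ⟨a, by omega⟩ ⟨a + 1, h⟩ := by
  rw [cycleGraph_adj']
  right
  rw [Fin.sub_def]
  show (m - a + (a + 1)) % m = 1
  have he : m - a + (a + 1) = m + 1 := by omega
  rw [he, Nat.add_mod_left, Nat.mod_eq_of_lt (by omega)]

lemma path3_adj (a b : Fin 3) (h : a.val + 1 = b.val ∨ b.val + 1 = a.val) :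
    (pathGraph 3).Adj a b := by
  rw [pathGraph_adj]; exact h

theorem starChromaticNumber_Cm_tensorProd_P3 (m : ℕ) (hm : 3 ≤ m) :
    ((cycleGraph m).tensorProd (pathGraph 3)).starChromaticNumber = 3 := by
  set G := (cycleGraph m).tensorProd (pathGraph 3) with hG
  have h3mem : 3 ∈ {n : ℕ | ∃ f : Fin m × Fin 3 → Fin n, G.IsStarColoring f} :=
    ⟨fcol m, fcol_star hm⟩
  have hlb : ∀ n ∈ {n : ℕ | ∃ f : Fin m × Fin 3 → Fin n, G.IsStarColoring f}, 3 ≤ n := by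
    rintro n ⟨f, _, hstar⟩
    -- the path (0,1) - (1,0) - (2,1) - (1,2)
    have ha01 : G.Adj (⟨0, by omega⟩, ⟨1, by norm_num⟩) (⟨1, by omega⟩, ⟨0, by norm_num⟩) :=
      ⟨cyc_adj_succ hm 0 (by omega), path3_adj _ _ (by simp)⟩
    have ha12 : G.Adj (⟨1, by omega⟩, ⟨0, by norm_num⟩) (⟨2, by omega⟩, ⟨1, by norm_num⟩) :=
      ⟨cyc_adj_succ hm 1 (by omega), path3_adj _ _ (by simp)⟩
    have ha23 : G.Adj (⟨2, by omega⟩, ⟨1, by norm_num⟩) (⟨1, by omega⟩, ⟨2, by norm_num⟩) :=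
      ⟨(cyc_adj_succ hm 1 (by omega)).symm, path3_adj _ _ (by simp)⟩
    let p : G.Walk (⟨0, by omega⟩, ⟨1, by norm_num⟩) (⟨1, by omega⟩, ⟨2, by norm_num⟩) :=
      SimpleGraph.Walk.cons ha01 (SimpleGraph.Walk.cons ha12
        (SimpleGraph.Walk.cons ha23 SimpleGraph.Walk.nil))
    have hpath : p.IsPath := by
      rw [SimpleGraph.Walk.isPath_def]
      simp [p, List.nodup_cons, Prod.ext_iff, Fin.ext_iff]
    have hlen : p.length = 3 := by simp [p]
    have hcard := hstar _ _ p hpath hlen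
    have hle : (p.support.map f).toFinset.card ≤ n := by
      calc (p.support.map f).toFinset.card ≤ (Finset.univ : Finset (Fin n)).card :=
            Finset.card_le_univ _
        _ = n := by simp
    omega
  exact le_antisymm (Nat.sInf_le h3mem) (le_csInf ⟨3, h3mem⟩ hlb)
end

section
/- For every pair of integers m and n where m ≥ 3, m is divisible by 3, and n ∈ {4,5}, the star chromatic number of the tensor product satisfies χ_s(C_m × P_n) = 4. -/
open SimpleGraph

namespace StarAux

lemma tensor_adj_iff {α β : Type*} {G : SimpleGraph α} {H : SimpleGraph β} {x y : α × β} :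
    (G.tensorProd H).Adj x y ↔ G.Adj x.1 y.1 ∧ H.Adj x.2 y.2 := Iff.rfl


def col (r : Fin 3) (j : Fin 5) : Fin 4 :=
  if j.val = 0 ∨ j.val = 4 then 0 else r.succ

lemma keyProp : ∀ (r r' : Fin 3) (j j' : Fin 5), r ≠ r' →
    (j'.val = j.val + 1 ∨ j.val = j'.val + 1) → col r j ≠ col r' j' := by decide

set_option synthInstance.maxSize 4000 in
set_option synthInstance.maxHeartbeats 2000000 in
set_option maxRecDepth 100000 in
set_option maxHeartbeats 4000000 in
lemma contrP : ∀ a b c d e f : Fin 3,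
    a ≠ b → b ≠ c → b ≠ d → c ≠ e → c ≠ f → d ≠ f →
    3 ≤ ({a, b, c, e} : Finset (Fin 3)).card →
    3 ≤ ({a, b, c, f} : Finset (Fin 3)).card →
    3 ≤ ({a, b, d, f} : Finset (Fin 3)).card →
    3 ≤ ({b, c, f, d} : Finset (Fin 3)).card →
    3 ≤ ({b, d, f, c} : Finset (Fin 3)).card →
    3 ≤ ({c, b, d, f} : Finset (Fin 3)).card →
    3 ≤ ({d, b, c, e} : Finset (Fin 3)).card →
    3 ≤ ({d, b, c, f} : Finset (Fin 3)).card →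
    3 ≤ ({d, f, c, e} : Finset (Fin 3)).card → False := by decide

set_option synthInstance.maxSize 4000 in
set_option synthInstance.maxHeartbeats 2000000 in
set_option maxRecDepth 100000 in
set_option maxHeartbeats 4000000 in
lemma contrC : ∀ a b c d e f : Fin 3,
    a ≠ b → a ≠ c → a ≠ f → b ≠ d → b ≠ e → c ≠ e →
    3 ≤ ({a, b, e, c} : Finset (Fin 3)).card →
    3 ≤ ({a, c, e, b} : Finset (Fin 3)).card →
    3 ≤ ({b, a, c, e} : Finset (Fin 3)).card →
    3 ≤ ({c, a, b, d} : Finset (Fin 3)).card →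
    3 ≤ ({c, a, b, e} : Finset (Fin 3)).card →
    3 ≤ ({c, e, b, d} : Finset (Fin 3)).card →
    3 ≤ ({d, b, a, f} : Finset (Fin 3)).card →
    3 ≤ ({e, b, a, f} : Finset (Fin 3)).card →
    3 ≤ ({e, c, a, f} : Finset (Fin 3)).card → False := by decide

lemma walk3 {α : Type*} {G : SimpleGraph α} {u v : α} (p : G.Walk u v) (hl : p.length = 3) :
    ∃ (b c : α) (_ : G.Adj u b) (_ : G.Adj b c) (_ : G.Adj c v),
      p.support = [u, b, c, v] := by
  cases p with
  | nil => simp at hl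
  | cons h1 q =>
    cases q with
    | nil => simp at hl
    | cons h2 r =>
      cases r with
      | nil => simp at hl
      | cons h3 s =>
        cases s with
        | nil => exact ⟨_, _, h1, h2, h3, rfl⟩
        | cons h4 t => simp [SimpleGraph.Walk.length_cons] at hl

lemma path3 {α : Type*} {G : SimpleGraph α} {k : ℕ} {a b c d : α}
    (h1 : G.Adj a b) (h2 : G.Adj b c) (h3 : G.Adj c d)
    (hac : a ≠ c) (had : a ≠ d) (hbd : b ≠ d) (f : α → Fin k)
    (hstar : ∀ (u v : α) (p : G.Walk u v), p.IsPath → p.length = 3 →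
      3 ≤ (p.support.map f).toFinset.card) :
    3 ≤ ({f a, f b, f c, f d} : Finset (Fin k)).card := by
  let p : G.Walk a d := .cons h1 (.cons h2 (.cons h3 .nil))
  have hp : p.IsPath := by
    rw [SimpleGraph.Walk.isPath_def]
    simp only [p, SimpleGraph.Walk.support_cons, SimpleGraph.Walk.support_nil,
      List.nodup_cons, List.mem_cons, List.mem_singleton, List.not_mem_nil,
      List.nodup_nil, and_true, not_or]
    exact ⟨⟨h1.ne, hac, had, not_false⟩, ⟨h2.ne, hbd, not_false⟩, ⟨h3.ne, not_false⟩, not_false⟩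
  have := hstar a d p hp (by simp [p])
  simpa [p, SimpleGraph.Walk.support_cons, SimpleGraph.Walk.support_nil] using this


set_option synthInstance.maxSize 4000 in
set_option synthInstance.maxHeartbeats 2000000 in
set_option maxRecDepth 100000 in
set_option maxHeartbeats 4000000 in
lemma key : ∀ (r0 r1 r2 r3 : Fin 3) (j0 j1 j2 j3 : Fin 5),
    r0 ≠ r1 → r1 ≠ r2 → r2 ≠ r3 →
    (j1.val = j0.val + 1 ∨ j0.val = j1.val + 1) →
    (j2.val = j1.val + 1 ∨ j1.val = j2.val + 1) →
    (j3.val = j2.val + 1 ∨ j2.val = j3.val + 1) →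
    ¬(r0 = r2 ∧ j0 = j2) → ¬(r1 = r3 ∧ j1 = j3) →
    3 ≤ ({col r0 j0, col r1 j1, col r2 j2, col r3 j3} : Finset (Fin 4)).card := by decide


/-- Successor equation characterization of cycle adjacency, at the `val` level. -/
lemma cyc_adj_val {m : ℕ} (hm : 3 ≤ m) {x y : Fin m} (h : (cycleGraph m).Adj x y) :
    y.val = (x.val + 1) % m ∨ x.val = (y.val + 1) % m := by
  have key : ∀ a b : ℕ, a < m → b < m → (m - b + a) % m = 1 → a = (b + 1) % m := by
    intro a b ha hb h
    rcases Nat.lt_or_ge (m - b + a) m with hlt | hge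
    · rw [Nat.mod_eq_of_lt hlt] at h
      have hb1 : b = m - 1 := by omega
      have ha0 : a = 0 := by omega
      rw [ha0, hb1]
      have : m - 1 + 1 = m := by omega
      rw [this, Nat.mod_self]
    · rw [Nat.mod_eq_sub_mod hge, Nat.mod_eq_of_lt (by omega)] at h
      rw [Nat.mod_eq_of_lt (by omega)]
      omega
  rw [cycleGraph_adj', Fin.sub_def, Fin.sub_def] at h
  simp only at h
  rcases h with h | h
  · exact Or.inr (key _ _ x.isLt y.isLt h)
  · exact Or.inl (key _ _ y.isLt x.isLt h)

/-- One step in the cycle changes the residue mod 3. -/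
lemma res_ne {m : ℕ} (hm : 3 ≤ m) (hdvd : 3 ∣ m) {x y : Fin m}
    (h : (cycleGraph m).Adj x y) : x.val % 3 ≠ y.val % 3 := by
  rcases cyc_adj_val hm h with h | h
  · rw [h, Nat.mod_mod_of_dvd _ hdvd]; omega
  · rw [h, Nat.mod_mod_of_dvd _ hdvd]; omega

lemma succ_mod_inj {m : ℕ} : ∀ a b : ℕ, a < m → b < m → (a + 1) % m = (b + 1) % m → a = b := by
  intro a b ha hb h
  rcases Nat.lt_or_ge (a + 1) m with h1 | h1 <;> rcases Nat.lt_or_ge (b + 1) m with h2 | h2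
  · rw [Nat.mod_eq_of_lt h1, Nat.mod_eq_of_lt h2] at h; omega
  · have e : b + 1 = m := by omega
    rw [Nat.mod_eq_of_lt h1, e, Nat.mod_self] at h; omega
  · have e : a + 1 = m := by omega
    rw [e, Nat.mod_self, Nat.mod_eq_of_lt h2] at h; omega
  · omega

/-- Two steps in the cycle ending at the same residue mod 3 return to the start. -/
lemma two_step_eq {m : ℕ} (hm : 3 ≤ m) (hdvd : 3 ∣ m) {x y z : Fin m}
    (h1 : (cycleGraph m).Adj x y) (h2 : (cycleGraph m).Adj y z)
    (hr : x.val % 3 = z.val % 3) : x = z := by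
  apply Fin.ext
  rcases cyc_adj_val hm h1 with e1 | e1 <;> rcases cyc_adj_val hm h2 with e2 | e2
  · exfalso
    rw [e2, e1, Nat.mod_add_mod, Nat.mod_mod_of_dvd _ hdvd] at hr
    omega
  · rw [e1] at e2
    exact succ_mod_inj _ _ x.isLt z.isLt e2
  · exact e1.trans e2.symm
  · exfalso
    rw [e1, e2, Nat.mod_add_mod, Nat.mod_mod_of_dvd _ hdvd] at hr
    omega

lemma cyc_succ {m : ℕ} {i : ℕ} (h : i < m) (h' : i + 1 < m) :
    (cycleGraph m).Adj ⟨i, h⟩ ⟨i + 1, h'⟩ := by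
  rw [cycleGraph_adj']
  right
  rw [Fin.sub_def]
  simp only
  have e : m - i + (i + 1) = m + 1 := by omega
  rw [e, Nat.add_mod_left]
  exact Nat.mod_eq_of_lt (by omega)


lemma cyc3_01 : (cycleGraph 3).Adj ⟨0, by omega⟩ ⟨1, by omega⟩ := by decide

lemma cyc3_12 : (cycleGraph 3).Adj ⟨1, by omega⟩ ⟨2, by omega⟩ := by decide

lemma cyc3_02 : (cycleGraph 3).Adj ⟨0, by omega⟩ ⟨2, by omega⟩ := by decide

end StarAux

open StarAux

theorem starChromaticNumber_C3k_tensorProd_Pn (m n : ℕ)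
    (hm : 3 ≤ m) (hdvd : 3 ∣ m) (hn : n = 4 ∨ n = 5) :
    ((cycleGraph m).tensorProd (pathGraph n)).starChromaticNumber = 4 := by
  have hn4 : 4 ≤ n := by omega
  have hn5 : n ≤ 5 := by omega
  set G := (cycleGraph m).tensorProd (pathGraph n) with hG
  have h4mem : 4 ∈ {k : ℕ | ∃ f : Fin m × Fin n → Fin k, G.IsStarColoring f} := by
    refine ⟨fun x => col ⟨x.1.val % 3, by omega⟩ ⟨x.2.val, by omega⟩, ?_, ?_⟩
    · intro u v huv
      obtain ⟨hc, hp⟩ := tensor_adj_iff.mp huv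
      apply keyProp
      · exact Fin.ne_of_val_ne (res_ne hm hdvd hc)
      · rw [pathGraph_adj] at hp
        show v.2.val = u.2.val + 1 ∨ u.2.val = v.2.val + 1
        omega
    · intro u v p hp hl
      obtain ⟨b, c, h1, h2, h3, hsupp⟩ := walk3 p hl
      rw [SimpleGraph.Walk.isPath_def, hsupp] at hp
      simp only [List.nodup_cons, List.mem_cons, List.mem_singleton, List.not_mem_nil,
        List.nodup_nil, and_true, not_or] at hp
      obtain ⟨⟨hub, huc, huv⟩, ⟨hbc, hbv⟩, hcv⟩ := hp
      have hc1 := (tensor_adj_iff.mp h1).1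
      have hp1 := (tensor_adj_iff.mp h1).2
      have hc2 := (tensor_adj_iff.mp h2).1
      have hp2 := (tensor_adj_iff.mp h2).2
      have hc3 := (tensor_adj_iff.mp h3).1
      have hp3 := (tensor_adj_iff.mp h3).2
      rw [hsupp]
      have goal_eq : (([u, b, c, v].map fun x =>
          col ⟨x.1.val % 3, by omega⟩ ⟨x.2.val, by omega⟩).toFinset) =
          ({col ⟨u.1.val % 3, by omega⟩ ⟨u.2.val, by omega⟩,
            col ⟨b.1.val % 3, by omega⟩ ⟨b.2.val, by omega⟩,
            col ⟨c.1.val % 3, by omega⟩ ⟨c.2.val, by omega⟩,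
            col ⟨v.1.val % 3, by omega⟩ ⟨v.2.val, by omega⟩} : Finset (Fin 4)) := by
        simp
      rw [goal_eq]
      apply key
      · exact Fin.ne_of_val_ne (res_ne hm hdvd hc1)
      · exact Fin.ne_of_val_ne (res_ne hm hdvd hc2)
      · exact Fin.ne_of_val_ne (res_ne hm hdvd hc3)
      · rw [pathGraph_adj] at hp1
        show b.2.val = u.2.val + 1 ∨ u.2.val = b.2.val + 1
        omega
      · rw [pathGraph_adj] at hp2
        show c.2.val = b.2.val + 1 ∨ b.2.val = c.2.val + 1
        omega
      · rw [pathGraph_adj] at hp3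
        show v.2.val = c.2.val + 1 ∨ c.2.val = v.2.val + 1
        omega
      · rintro ⟨hr, hj⟩
        apply huc
        refine Prod.ext ?_ ?_
        · exact two_step_eq hm hdvd hc1 hc2 (by simpa [Fin.ext_iff] using hr)
        · exact Fin.ext (by simpa [Fin.ext_iff] using hj)
      · rintro ⟨hr, hj⟩
        apply hbv.1
        refine Prod.ext ?_ ?_
        · exact two_step_eq hm hdvd hc2 hc3 (by simpa [Fin.ext_iff] using hr)
        · exact Fin.ext (by simpa [Fin.ext_iff] using hj)
  refine le_antisymm (Nat.sInf_le h4mem) ?_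
  apply le_csInf ⟨4, h4mem⟩
  rintro k ⟨f, hf⟩
  by_contra hlt
  push_neg at hlt
  have hk3 : k ≤ 3 := by omega
  set g : Fin m × Fin n → Fin 3 := Fin.castLE hk3 ∘ f with hgdef
  have hgp : ∀ ⦃u v : Fin m × Fin n⦄, G.Adj u v → g u ≠ g v := by
    intro u v h he
    exact hf.1 h (Fin.castLE_injective hk3 he)
  have hgs : ∀ (u v : Fin m × Fin n) (p : G.Walk u v), p.IsPath → p.length = 3 →
      3 ≤ (p.support.map g).toFinset.card := by
    intro u v p hp hl
    have e0 : p.support.map g = (p.support.map f).map (Fin.castLE hk3) := by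
      rw [hgdef, List.map_map]
    have e1 : (p.support.map g).toFinset = (p.support.map f).toFinset.image
        (Fin.castLE hk3) := by
      rw [e0]
      ext x
      simp only [List.mem_toFinset, List.mem_map, Finset.mem_image, Prod.exists]
    have hcard : (p.support.map g).toFinset.card = (p.support.map f).toFinset.card := by
      rw [e1, Finset.card_image_of_injective _ (Fin.castLE_injective hk3)]
    rw [hcard]
    exact hf.2 u v p hp hl
  clear hgdef
  have pAdj : ∀ (j j' : Fin n), j'.val = j.val + 1 → (pathGraph n).Adj j j' := by
    intro j j' h
    rw [pathGraph_adj]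
    omega
  have ne' : ∀ (x y : Fin m × Fin n), x.1.val ≠ y.1.val ∨ x.2.val ≠ y.2.val → x ≠ y := by
    rintro x y h rfl
    simp at h
  rcases Nat.lt_or_ge m 4 with hm4 | hm4
  · -- m = 3
    have hm3 : m = 3 := by omega
    subst hm3
    set vA : Fin 3 × Fin n := (⟨0, by omega⟩, ⟨2, by omega⟩) with hvA
    set vB : Fin 3 × Fin n := (⟨1, by omega⟩, ⟨1, by omega⟩) with hvB
    set vC : Fin 3 × Fin n := (⟨1, by omega⟩, ⟨3, by omega⟩) with hvC
    set vD : Fin 3 × Fin n := (⟨2, by omega⟩, ⟨0, by omega⟩) with hvD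
    set vE : Fin 3 × Fin n := (⟨2, by omega⟩, ⟨2, by omega⟩) with hvE
    set vF : Fin 3 × Fin n := (⟨2, by omega⟩, ⟨3, by omega⟩) with hvF
    have hAB : G.Adj vA vB := tensor_adj_iff.mpr
      ⟨cyc3_01, (pAdj _ _ (by simp [hvA, hvB])).symm⟩
    have hAC : G.Adj vA vC := tensor_adj_iff.mpr
      ⟨cyc3_01, pAdj _ _ (by simp [hvA, hvC])⟩
    have hAF : G.Adj vA vF := tensor_adj_iff.mpr
      ⟨cyc3_02, pAdj _ _ (by simp [hvA, hvF])⟩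
    have hBD : G.Adj vB vD := tensor_adj_iff.mpr
      ⟨cyc3_12, (pAdj _ _ (by simp [hvB, hvD])).symm⟩
    have hBE : G.Adj vB vE := tensor_adj_iff.mpr
      ⟨cyc3_12, pAdj _ _ (by simp [hvB, hvE])⟩
    have hCE : G.Adj vC vE := tensor_adj_iff.mpr
      ⟨cyc3_12, (pAdj _ _ (by simp [hvC, hvE])).symm⟩
    exact contrC (g vA) (g vB) (g vC) (g vD) (g vE) (g vF)
      (hgp hAB) (hgp hAC) (hgp hAF) (hgp hBD) (hgp hBE) (hgp hCE)
      (path3 hAB hBE hCE.symm (ne' _ _ (by simp [hvA, hvE]))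
        (ne' _ _ (by simp [hvA, hvC])) (ne' _ _ (by simp [hvB, hvC])) g hgs)
      (path3 hAC hCE hBE.symm (ne' _ _ (by simp [hvA, hvE]))
        (ne' _ _ (by simp [hvA, hvB])) (ne' _ _ (by simp [hvC, hvB])) g hgs)
      (path3 hAB.symm hAC hCE (ne' _ _ (by simp [hvB, hvC]))
        (ne' _ _ (by simp [hvB, hvE])) (ne' _ _ (by simp [hvA, hvE])) g hgs)
      (path3 hAC.symm hAB hBD (ne' _ _ (by simp [hvC, hvB]))
        (ne' _ _ (by simp [hvC, hvD])) (ne' _ _ (by simp [hvA, hvD])) g hgs)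
      (path3 hAC.symm hAB hBE (ne' _ _ (by simp [hvC, hvB]))
        (ne' _ _ (by simp [hvC, hvE])) (ne' _ _ (by simp [hvA, hvE])) g hgs)
      (path3 hCE hBE.symm hBD (ne' _ _ (by simp [hvC, hvB]))
        (ne' _ _ (by simp [hvC, hvD])) (ne' _ _ (by simp [hvE, hvD])) g hgs)
      (path3 hBD.symm hAB.symm hAF (ne' _ _ (by simp [hvD, hvA]))
        (ne' _ _ (by simp [hvD, hvF])) (ne' _ _ (by simp [hvB, hvF])) g hgs)
      (path3 hBE.symm hAB.symm hAF (ne' _ _ (by simp [hvE, hvA]))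
        (ne' _ _ (by simp [hvE, hvF])) (ne' _ _ (by simp [hvB, hvF])) g hgs)
      (path3 hCE.symm hAC.symm hAF (ne' _ _ (by simp [hvE, hvA]))
        (ne' _ _ (by simp [hvE, hvF])) (ne' _ _ (by simp [hvC, hvF])) g hgs)
  · -- m ≥ 4
    set vA : Fin m × Fin n := (⟨0, by omega⟩, ⟨3, by omega⟩) with hvA
    set vB : Fin m × Fin n := (⟨1, by omega⟩, ⟨2, by omega⟩) with hvB
    set vC : Fin m × Fin n := (⟨2, by omega⟩, ⟨1, by omega⟩) with hvC
    set vD : Fin m × Fin n := (⟨2, by omega⟩, ⟨3, by omega⟩) with hvD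
    set vE : Fin m × Fin n := (⟨3, by omega⟩, ⟨0, by omega⟩) with hvE
    set vF : Fin m × Fin n := (⟨3, by omega⟩, ⟨2, by omega⟩) with hvF
    have hAB : G.Adj vA vB := tensor_adj_iff.mpr
      ⟨cyc_succ (by omega) (by omega), (pAdj _ _ (by simp [hvA, hvB])).symm⟩
    have hBC : G.Adj vB vC := tensor_adj_iff.mpr
      ⟨cyc_succ (by omega) (by omega), (pAdj _ _ (by simp [hvB, hvC])).symm⟩
    have hBD : G.Adj vB vD := tensor_adj_iff.mpr
      ⟨cyc_succ (by omega) (by omega), pAdj _ _ (by simp [hvB, hvD])⟩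
    have hCE : G.Adj vC vE := tensor_adj_iff.mpr
      ⟨cyc_succ (by omega) (by omega), (pAdj _ _ (by simp [hvC, hvE])).symm⟩
    have hCF : G.Adj vC vF := tensor_adj_iff.mpr
      ⟨cyc_succ (by omega) (by omega), pAdj _ _ (by simp [hvC, hvF])⟩
    have hDF : G.Adj vD vF := tensor_adj_iff.mpr
      ⟨cyc_succ (by omega) (by omega), (pAdj _ _ (by simp [hvD, hvF])).symm⟩
    exact contrP (g vA) (g vB) (g vC) (g vD) (g vE) (g vF)
      (hgp hAB) (hgp hBC) (hgp hBD) (hgp hCE) (hgp hCF) (hgp hDF)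
      (path3 hAB hBC hCE (ne' _ _ (by simp [hvA, hvC]))
        (ne' _ _ (by simp [hvA, hvE])) (ne' _ _ (by simp [hvB, hvE])) g hgs)
      (path3 hAB hBC hCF (ne' _ _ (by simp [hvA, hvC]))
        (ne' _ _ (by simp [hvA, hvF])) (ne' _ _ (by simp [hvB, hvF])) g hgs)
      (path3 hAB hBD hDF (ne' _ _ (by simp [hvA, hvD]))
        (ne' _ _ (by simp [hvA, hvF])) (ne' _ _ (by simp [hvB, hvF])) g hgs)
      (path3 hBC hCF hDF.symm (ne' _ _ (by simp [hvB, hvF]))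
        (ne' _ _ (by simp [hvB, hvD])) (ne' _ _ (by simp [hvC, hvD])) g hgs)
      (path3 hBD hDF hCF.symm (ne' _ _ (by simp [hvB, hvF]))
        (ne' _ _ (by simp [hvB, hvC])) (ne' _ _ (by simp [hvD, hvC])) g hgs)
      (path3 hBC.symm hBD hDF (ne' _ _ (by simp [hvC, hvD]))
        (ne' _ _ (by simp [hvC, hvF])) (ne' _ _ (by simp [hvB, hvF])) g hgs)
      (path3 hBD.symm hBC hCE (ne' _ _ (by simp [hvD, hvC]))
        (ne' _ _ (by simp [hvD, hvE])) (ne' _ _ (by simp [hvB, hvE])) g hgs)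
      (path3 hBD.symm hBC hCF (ne' _ _ (by simp [hvD, hvC]))
        (ne' _ _ (by simp [hvD, hvF])) (ne' _ _ (by simp [hvB, hvF])) g hgs)
      (path3 hDF hCF.symm hCE (ne' _ _ (by simp [hvD, hvC]))
        (ne' _ _ (by simp [hvD, hvE])) (ne' _ _ (by simp [hvF, hvE])) g hgs)
end
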